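/- arXiv:1910.04399 — 9 statements merged into one kernel-verified Lean document; each statement's English description precedes it below -/
import Mathlib

section
/- The burning number of a path on m vertices equals the ceiling of the square root of m. -/
/-- A graph is `m`-burnable if its vertices can be covered by `m` balls of
radii `0, 1, ..., m-1`. -/
def IsBurnable {V : Type*} (G : SimpleGraph V) (m : ℕ) : Prop :=
  ∃ f : Fin m → V, ∀ v : V, ∃ i : Fin m, G.edist (f i) v ≤ (i.val : ℕ∞)

/-- The burning number of a graph: the least `k` such that the graph is `k`-burnable. -/
noncomputable def burningNumber {V : Type*} (G : SimpleGraph V) : ℕ :=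
  sInf {k : ℕ | IsBurnable G k}

/-- The path forest whose `i`-th path has `l i` vertices. -/
def pathForest {n : ℕ} (l : Fin n → ℕ) : SimpleGraph (Σ i : Fin n, Fin (l i)) where
  Adj x y := x.1 = y.1 ∧ Nat.dist x.2.val y.2.val = 1
  symm := by
    constructor
    rintro ⟨i, a⟩ ⟨j, b⟩ ⟨h1, h2⟩
    exact ⟨h1.symm, by rwa [Nat.dist_comm]⟩
  loopless := by
    constructor
    rintro ⟨i, a⟩ ⟨_, h⟩
    simp [Nat.dist_self] at h

/-- The spider with head `none` and arms of lengths `l 0, ..., l (n-1)`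
(arm lengths count vertices excluding the head). -/
def spider {n : ℕ} (l : Fin n → ℕ) : SimpleGraph (Option (Σ i : Fin n, Fin (l i))) where
  Adj x y :=
    match x, y with
    | none, none => False
    | none, some b => b.2.val = 0
    | some a, none => a.2.val = 0
    | some a, some b => a.1 = b.1 ∧ Nat.dist a.2.val b.2.val = 1
  symm := by
    constructor
    rintro (_ | ⟨i, a⟩) (_ | ⟨j, b⟩) h <;> simp_all [Nat.dist_comm]

  loopless := by
    constructor
    rintro (_ | ⟨i, a⟩) h <;> simp_all [Nat.dist_self]
section BurnAux
open SimpleGraph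


-- walk lower bound
lemma dist_le_walk_length {m : ℕ} {u v : Fin m} (p : (pathGraph m).Walk u v) :
    Nat.dist u.val v.val ≤ p.length := by
  induction p with
  | nil => simp [Nat.dist_self]
  | cons h p ih =>
    rename_i a b c
    have hab : Nat.dist a.val b.val = 1 := by
      rcases pathGraph_adj.mp h with h1 | h1 <;> simp [Nat.dist, ← h1] <;> omega
    calc Nat.dist a.val c.val ≤ Nat.dist a.val b.val + Nat.dist b.val c.val :=
          Nat.dist.triangle_inequality _ _ _
      _ ≤ 1 + p.length := by omega
      _ = (p.cons h).length := by simp [Walk.length_cons]; omega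

lemma edist_le_of_dist {m : ℕ} (u v : Fin m) :
    (pathGraph m).edist u v ≤ (Nat.dist u.val v.val : ℕ∞) := by
  -- first: for v.val = u.val + n
  have key : ∀ n : ℕ, ∀ u v : Fin m, v.val = u.val + n →
      (pathGraph m).edist u v ≤ (n : ℕ∞) := by
    intro n
    induction n with
    | zero => intro u v h; have : u = v := Fin.ext (by omega); simp [this]
    | succ n ih =>
      intro u v h
      have hu1 : u.val + 1 < m := by omega
      set w : Fin m := ⟨u.val + 1, hu1⟩ with hw
      have hadj : (pathGraph m).Adj u w := pathGraph_adj.mpr (Or.inl rfl)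
      have h1 : (pathGraph m).edist u w ≤ 1 := by
        simpa using SimpleGraph.edist_le (Walk.cons hadj Walk.nil)
      have h2 : (pathGraph m).edist w v ≤ (n : ℕ∞) := ih w v (by simp [hw]; omega)
      calc (pathGraph m).edist u v ≤ _ + _ := SimpleGraph.edist_triangle (v := w)
        _ ≤ 1 + (n : ℕ∞) := add_le_add h1 h2
        _ = ((n+1 : ℕ) : ℕ∞) := by push_cast; ring
  rcases le_total u.val v.val with h | h
  · exact (key (v.val - u.val) u v (by omega)).trans (by
      norm_cast; simp [Nat.dist])
  · rw [SimpleGraph.edist_comm]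
    exact (key (u.val - v.val) v u (by omega)).trans (by
      norm_cast; simp [Nat.dist])

lemma dist_le_of_edist {m : ℕ} {u v : Fin m} {i : ℕ}
    (h : (pathGraph m).edist u v ≤ (i : ℕ∞)) : Nat.dist u.val v.val ≤ i := by
  have hne : (pathGraph m).edist u v ≠ ⊤ := by
    intro ht; rw [ht] at h; exact (ENat.coe_ne_top i) (top_le_iff.mp h)
  obtain ⟨p, hp⟩ := SimpleGraph.exists_walk_of_edist_ne_top hne
  have := dist_le_walk_length p
  have hlen : (p.length : ℕ∞) ≤ (i : ℕ∞) := by rw [hp]; exact h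
  have : p.length ≤ i := by exact_mod_cast hlen
  omega

lemma burnable_of_sq (m k : ℕ) (hm : 1 ≤ m) (hk : m ≤ k * k) :
    IsBurnable (pathGraph m) k := by
  refine ⟨fun i => ⟨min (i.val * i.val + i.val) (m - 1), by omega⟩, fun v => ?_⟩
  set i : ℕ := Nat.sqrt v.val with hi
  have h1 : i * i ≤ v.val := by simpa [pow_two] using Nat.sqrt_le' v.val
  have h2 : v.val < i * i + 2 * i + 1 := by
    have := Nat.lt_succ_sqrt' v.val
    simp only [pow_two, Nat.succ_eq_add_one] at this
    calc v.val < (i + 1) * (i + 1) := by rw [hi]; exact this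
      _ = i * i + 2 * i + 1 := by ring
  have hv : v.val < m := v.isLt
  have hik : i < k := by
    by_contra h
    push_neg at h
    have h3 : k * k ≤ i * i := Nat.mul_le_mul h h
    omega
  refine ⟨⟨i, hik⟩, ?_⟩
  refine le_trans (edist_le_of_dist _ _) ?_
  have : Nat.dist (min (i * i + i) (m - 1)) v.val ≤ i := by
    have hs : i * i + i ≥ i * i := by omega
    simp only [Nat.dist]
    omega
  exact_mod_cast this

lemma sum_odds (j : ℕ) : ∑ i ∈ Finset.range j, (2 * i + 1) = j * j := by
  induction j with
  | zero => simp
  | succ n ih => rw [Finset.sum_range_succ, ih]; ring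

lemma not_burnable_of_sq (m j : ℕ) (hj : j * j < m) :
    ¬ IsBurnable (pathGraph m) j := by
  rintro ⟨f, hf⟩
  have hsub : (Finset.univ : Finset (Fin m)) ⊆
      Finset.univ.biUnion (fun i : Fin j =>
        Finset.univ.filter (fun v : Fin m => Nat.dist (f i).val v.val ≤ i.val)) := by
    intro v _
    obtain ⟨i, hi⟩ := hf v
    exact Finset.mem_biUnion.mpr ⟨i, Finset.mem_univ _,
      Finset.mem_filter.mpr ⟨Finset.mem_univ _, dist_le_of_edist hi⟩⟩
  have hcard : ∀ i : Fin j,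
      (Finset.univ.filter (fun v : Fin m => Nat.dist (f i).val v.val ≤ i.val)).card
        ≤ 2 * i.val + 1 := by
    intro i
    have : (Finset.univ.filter (fun v : Fin m => Nat.dist (f i).val v.val ≤ i.val)).card
        ≤ (Finset.Icc ((f i).val - i.val) ((f i).val + i.val)).card := by
      apply Finset.card_le_card_of_injOn (fun v => v.val)
      · intro v hv
        simp only [Finset.mem_coe, Finset.mem_filter] at hv
        have := hv.2
        simp only [Nat.dist] at this
        simp only [Finset.mem_coe, Finset.mem_Icc]
        omega
      · intro a _ b _ h
        exact Fin.ext h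
    rw [Nat.card_Icc] at this
    omega
  have hsum : ∑ i : Fin j, (2 * i.val + 1) = j * j := by
    rw [Fin.sum_univ_eq_sum_range (fun x => 2 * x + 1)]
    exact sum_odds j
  have : m ≤ j * j := by
    calc m = (Finset.univ : Finset (Fin m)).card := by simp
      _ ≤ _ := Finset.card_le_card hsub
      _ ≤ ∑ i : Fin j, (2 * i.val + 1) :=
          (Finset.card_biUnion_le).trans (Finset.sum_le_sum fun i _ => hcard i)
      _ = j * j := hsum
  omega

end BurnAux

open SimpleGraph in
/-- The burning number of a path on `m` vertices is `⌈√m⌉`. -/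
theorem burningNumber_path (m : ℕ) (hm : 1 ≤ m) :
    burningNumber (SimpleGraph.pathGraph m) = ⌈Real.sqrt m⌉₊ := by
  set k := ⌈Real.sqrt m⌉₊ with hk
  have hmk : m ≤ k * k := by
    have h1 : Real.sqrt m ≤ k := Nat.le_ceil _
    have h2 : (m : ℝ) ≤ (k : ℝ) * (k : ℝ) := by
      have := Real.sq_sqrt (by positivity : (0:ℝ) ≤ (m:ℝ))
      nlinarith [Real.sqrt_nonneg (m:ℝ)]
    exact_mod_cast h2
  have hmem : k ∈ {k : ℕ | IsBurnable (pathGraph m) k} := burnable_of_sq m k hm hmk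
  refine le_antisymm (Nat.sInf_le hmem) ?_
  refine le_csInf ⟨k, hmem⟩ fun j hj => ?_
  by_contra h
  push_neg at h
  have hjm : j * j < m := by
    have h1 : (j : ℝ) < Real.sqrt m := by
      have := Nat.lt_ceil.mp h
      exact_mod_cast this
    have h2 : (j : ℝ) * (j : ℝ) < (m : ℝ) := by
      have := Real.sq_sqrt (by positivity : (0:ℝ) ≤ (m:ℝ))
      nlinarith [Nat.cast_nonneg (α := ℝ) j]
    exact_mod_cast h2
  exact not_burnable_of_sq m j hjm hj
end

section
/- Let n ≥ 2 and let T be a disjoint union of n paths with path orders l_1 ≥ l_2 ≥ ... ≥ l_n such that l_n = 1 and l_{n-1} ≥ 3. If the total number of vertices of T is at most 4n - 4, then T can be burned in n rounds (i.e., b(T) ≤ n). -/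
lemma pf_edist_le_of_add {n : ℕ} (l : Fin n → ℕ) (i : Fin n) :
    ∀ (k : ℕ) (a b : Fin (l i)), b.val = a.val + k →
      (pathForest l).edist ⟨i, a⟩ ⟨i, b⟩ ≤ (k : ℕ∞) := by
  intro k
  induction k with
  | zero =>
    intro a b h
    have : a = b := Fin.ext (by omega)
    subst this
    simp [SimpleGraph.edist_self]
  | succ k ih =>
    intro a b h
    have ha' : a.val + 1 < l i := by omega
    have hadj : (pathForest l).Adj ⟨i, a⟩ ⟨i, ⟨a.val + 1, ha'⟩⟩ := by
      refine ⟨rfl, ?_⟩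
      simp [Nat.dist]
    have h1 : (pathForest l).edist ⟨i, a⟩ ⟨i, ⟨a.val + 1, ha'⟩⟩ = 1 :=
      (SimpleGraph.edist_eq_one_iff_adj).2 hadj
    have h2 := ih ⟨a.val + 1, ha'⟩ b (by simp only [Fin.val_mk]; omega)
    calc (pathForest l).edist ⟨i, a⟩ ⟨i, b⟩
        ≤ (pathForest l).edist ⟨i, a⟩ ⟨i, ⟨a.val + 1, ha'⟩⟩ +
          (pathForest l).edist ⟨i, ⟨a.val + 1, ha'⟩⟩ ⟨i, b⟩ := SimpleGraph.edist_triangle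
      _ ≤ 1 + (k : ℕ∞) := add_le_add h1.le h2
      _ = ((k + 1 : ℕ) : ℕ∞) := by push_cast; ring

lemma pf_edist_le_dist {n : ℕ} (l : Fin n → ℕ) (i : Fin n) (a b : Fin (l i)) :
    (pathForest l).edist ⟨i, a⟩ ⟨i, b⟩ ≤ (Nat.dist a.val b.val : ℕ∞) := by
  rcases le_total a.val b.val with h | h
  · have := pf_edist_le_of_add l i (b.val - a.val) a b (by omega)
    rwa [Nat.dist_eq_sub_of_le h]
  · have := pf_edist_le_of_add l i (a.val - b.val) b a (by omega)
    rw [Nat.dist_eq_sub_of_le_right h, SimpleGraph.edist_comm]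
    exact this

lemma pf_cover {n : ℕ} (l : Fin n → ℕ) (j j' : Fin n) (hjj : j' = j) (c : ℕ)
    (hc : c < l j') (p : Fin (l j)) (r : ℕ) (h1 : Nat.dist c p.val ≤ r) :
    (pathForest l).edist ⟨j', ⟨c, hc⟩⟩ ⟨j, p⟩ ≤ (r : ℕ∞) := by
  subst hjj
  exact le_trans (pf_edist_le_dist l j' ⟨c, hc⟩ p) (by exact_mod_cast h1)

/-- A path forest with `n ≥ 2` paths of orders `l₁ ≥ ⋯ ≥ lₙ` with `lₙ = 1`,
`l_{n-1} ≥ 3` and total order at most `4n - 4` is `n`-burnable. -/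
theorem stmt1 (n : ℕ) (hn : 2 ≤ n) (l : Fin n → ℕ)
    (hsorted : ∀ i j : Fin n, i ≤ j → l j ≤ l i)
    (hlast : l ⟨n - 1, by omega⟩ = 1)
    (hprev : 3 ≤ l ⟨n - 2, by omega⟩)
    (horder : ∑ i, l i ≤ 4 * n - 4) :
    IsBurnable (pathForest l) n := by
  have hlast' : ∀ h : n - 1 < n, l ⟨n - 1, h⟩ = 1 := fun _ => hlast
  have hprev' : ∀ h : n - 2 < n, 3 ≤ l ⟨n - 2, h⟩ := fun _ => hprev
  have hge3 : ∀ j : Fin n, (j : ℕ) < n - 1 → 3 ≤ l j := by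
    intro j hj
    exact le_trans (hprev' (by omega)) (hsorted j ⟨n - 2, by omega⟩ (by
      simp only [Fin.le_def, Fin.val_mk]; omega))
  have key : ∀ j : Fin n, (j : ℕ) < n - 1 → l j ≤ 2 * (n - 1 - (j : ℕ)) + 1 := by
    intro j hj
    obtain ⟨m, hm⟩ : ∃ m, n = (j : ℕ) + 2 + m := ⟨n - 2 - (j : ℕ), by omega⟩
    set L : ℕ → ℕ := fun i => if h : i < n then l ⟨i, h⟩ else 0 with hL
    have hsum : ∑ i : Fin n, l i = ∑ i ∈ Finset.range n, L i := by
      rw [← Fin.sum_univ_eq_sum_range]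
      exact Finset.sum_congr rfl fun i _ => by simp [hL, i.isLt]
    have hsplit1 : ∑ i ∈ Finset.Ico 0 ((j : ℕ) + 1), L i
        + ∑ i ∈ Finset.Ico ((j : ℕ) + 1) (n - 1), L i
        = ∑ i ∈ Finset.Ico 0 (n - 1), L i :=
      Finset.sum_Ico_consecutive _ (by omega) (by omega)
    have hsplit2 : ∑ i ∈ Finset.Ico 0 (n - 1), L i + ∑ i ∈ Finset.Ico (n - 1) n, L i
        = ∑ i ∈ Finset.Ico 0 n, L i :=
      Finset.sum_Ico_consecutive _ (by omega) (by omega)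
    have hb1 : ((j : ℕ) + 1) * l j ≤ ∑ i ∈ Finset.Ico 0 ((j : ℕ) + 1), L i := by
      have := Finset.card_nsmul_le_sum (Finset.Ico 0 ((j : ℕ) + 1)) L (l j) (by
        intro i hi
        rw [Finset.mem_Ico] at hi
        have hin : i < n := by omega
        have : l j ≤ l ⟨i, hin⟩ := hsorted ⟨i, hin⟩ j (by
          simp only [Fin.le_def, Fin.val_mk]; omega)
        simpa [hL, hin] using this)
      simpa [Nat.card_Ico, smul_eq_mul] using this
    have hb2 : m * 3 ≤ ∑ i ∈ Finset.Ico ((j : ℕ) + 1) (n - 1), L i := by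
      have := Finset.card_nsmul_le_sum (Finset.Ico ((j : ℕ) + 1) (n - 1)) L 3 (by
        intro i hi
        rw [Finset.mem_Ico] at hi
        have hin : i < n := by omega
        have : 3 ≤ l ⟨i, hin⟩ := hge3 ⟨i, hin⟩ (by simpa using hi.2)
        simpa [hL, hin] using this)
      have hcard : (Finset.Ico ((j : ℕ) + 1) (n - 1)).card = m := by
        rw [Nat.card_Ico]; omega
      rw [hcard, smul_eq_mul] at this
      exact this
    have hb3 : ∑ i ∈ Finset.Ico (n - 1) n, L i = 1 := by
      rw [Finset.sum_Ico_eq_sum_range]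
      have h1 : n - (n - 1) = 1 := by omega
      rw [h1, Finset.sum_range_one]
      simp only [add_zero, hL]
      rw [dif_pos (by omega : n - 1 < n)]
      exact hlast' _
    have htot : ((j : ℕ) + 1) * l j + m * 3 + 1 ≤ 4 * n - 4 := by
      have := horder
      rw [hsum, Finset.range_eq_Ico, ← hsplit2, ← hsplit1, hb3] at this
      omega
    have h4 : ((j : ℕ) + 1) * l j ≤ 4 * (j : ℕ) + m + 3 := by omega
    have hgoal : l j ≤ 2 * m + 3 := by
      by_contra hcon
      push_neg at hcon
      have : ((j : ℕ) + 1) * (2 * m + 4) ≤ ((j : ℕ) + 1) * l j :=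
        Nat.mul_le_mul_left _ (by omega)
      nlinarith
    omega
  refine ⟨fun k => if hk : (k : ℕ) = 0 then
      ⟨⟨n - 1, by omega⟩, ⟨0, by rw [hlast' (by omega)]; omega⟩⟩
    else
      ⟨⟨n - 1 - (k : ℕ), by omega⟩,
        ⟨min (k : ℕ) (l ⟨n - 1 - (k : ℕ), by omega⟩ - 1), by
          have h3 : 3 ≤ l ⟨n - 1 - (k : ℕ), by omega⟩ := hge3 _ (by
            simp only [Fin.val_mk]; omega)
          omega⟩⟩, ?_⟩
  rintro ⟨j, p⟩
  by_cases hj : (j : ℕ) = n - 1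
  · refine ⟨⟨0, by omega⟩, ?_⟩
    have hlj : l j = 1 := by
      have : j = ⟨n - 1, by omega⟩ := Fin.ext (by simpa using hj)
      rw [this]; exact hlast' _
    simp only []
    rw [dif_pos (by simp)]
    exact pf_cover l j _ (Fin.ext (by simp [hj])) 0 _ p _ (by
      have := p.isLt
      simp only [Nat.dist, Fin.val_mk]
      omega)
  · have hjlt : (j : ℕ) < n - 1 := by have := j.isLt; omega
    refine ⟨⟨n - 1 - (j : ℕ), by omega⟩, ?_⟩
    simp only []
    rw [dif_neg (by first | (simp only [Fin.val_mk]; omega) | omega)]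
    have hkey := key j hjlt
    refine pf_cover l j _ (Fin.ext (by simp only [Fin.val_mk]; omega)) _ _ p _ ?_
    have hXj : ∀ h, l ⟨n - 1 - (n - 1 - (j : ℕ)), h⟩ = l j := fun h =>
      congrArg l (Fin.ext (by simp only [Fin.val_mk]; omega))
    rw [hXj]
    have hp := p.isLt
    have h3 := hge3 j hjlt
    simp only [Nat.dist, Fin.val_mk]
    omega
end

section
/- Let n ≥ 1 and let T be a path forest with n paths. If m ≥ n and the order of T is at most 3m - 1 - n, then T is m-burnable. -/
/-- total coverage capacity of a list of radii -/
def caps (rs : List ℕ) : ℕ := (rs.map (fun r => 2*r+1)).sum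

@[simp] lemma caps_nil : caps [] = 0 := rfl
@[simp] lemma caps_cons (r : ℕ) (t : List ℕ) : caps (r :: t) = 2*r+1 + caps t := rfl

/-- `R` is a valid assignment of radii (all `< m`, pairwise distinct) to the
paths with lengths `L`, covering each path. -/
def AssignR (m : ℕ) (L : List ℕ) (R : List (List ℕ)) : Prop :=
  R.length = L.length ∧ R.flatten.Nodup ∧ (∀ r ∈ R.flatten, r < m) ∧
  ∀ j, L.getD j 0 ≤ caps (R.getD j [])

lemma assign_perm {m : ℕ} : ∀ {L L' : List ℕ}, L.Perm L' → ∀ R, AssignR m L R →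
    ∃ R', AssignR m L' R' ∧ R'.flatten.Perm R.flatten := by
  intro L L' hp
  induction hp with
  | nil => exact fun R hR => ⟨R, hR, .refl _⟩
  | @cons x l₁ l₂ p ih =>
    rintro R ⟨hlen, hnd, hbd, hcov⟩
    match R with
    | [] => simp at hlen
    | r :: R₀ =>
      simp only [List.flatten_cons] at hnd hbd
      obtain ⟨R₀', hA', hperm'⟩ := ih R₀ ⟨by simpa using hlen,
        hnd.of_append_right,
        fun s hs => hbd s (List.mem_append_right _ hs),
        fun j => by simpa [List.getD_cons_succ] using hcov (j+1)⟩
      obtain ⟨hlen', hnd', hbd', hcov'⟩ := hA'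
      have hfp : (r :: R₀').flatten.Perm (r :: R₀).flatten := by
        simpa [List.flatten_cons] using hperm'.append_left r
      refine ⟨r :: R₀', ⟨by simpa using hlen', hfp.nodup_iff.mpr hnd,
        fun s hs => hbd s (hfp.mem_iff.mp hs), fun j => ?_⟩, hfp⟩
      cases j with
      | zero => simpa using hcov 0
      | succ j => simpa [List.getD_cons_succ] using hcov' j
  | @swap x y l =>
    rintro R ⟨hlen, hnd, hbd, hcov⟩
    match R with
    | [] => simp at hlen
    | [a] => simp at hlen
    | a :: b :: R₀ =>
      have hfp : (b :: a :: R₀).flatten.Perm ((a :: b :: R₀) : List (List ℕ)).flatten := by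
        simp only [List.flatten_cons, ← List.append_assoc]
        exact (List.perm_append_comm).append_right _
      refine ⟨b :: a :: R₀, ⟨by simpa using hlen, hfp.nodup_iff.mpr hnd,
        fun s hs => hbd s (hfp.mem_iff.mp hs), fun j => ?_⟩, hfp⟩
      match j with
      | 0 => simpa using hcov 1
      | 1 => simpa using hcov 0
      | (j+2) => simpa [List.getD_cons_succ] using hcov (j+2)
  | @trans l₁ l₂ l₃ p₁ p₂ ih₁ ih₂ =>
    rintro R hR
    obtain ⟨R', hR', hp'⟩ := ih₁ R hR
    obtain ⟨R'', hR'', hp''⟩ := ih₂ R' hR'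
    exact ⟨R'', hR'', hp''.trans hp'⟩

lemma flatten_map_singleton (l : List ℕ) : (l.map (fun j => [j])).flatten = l := by
  induction l with
  | nil => simp
  | cons a t ih => simp [ih]

lemma length_le_sum (l : List ℕ) (h : ∀ x ∈ l, 1 ≤ x) : l.length ≤ l.sum := by
  induction l with
  | nil => simp
  | cons a t ih =>
    have := h a (by simp)
    have := ih (fun x hx => h x (by simp [hx]))
    simp only [List.length_cons, List.sum_cons]; omega

lemma assign_main : ∀ m : ℕ, ∀ L : List ℕ, (∀ x ∈ L, 1 ≤ x) → L.length ≤ m →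
    L.sum + L.length + 1 ≤ 3*m → ∃ R, AssignR m L R := by
  intro m
  induction m using Nat.strong_induction_on with
  | _ m ih =>
    intro L h1 h2 h3
    obtain ⟨Ls, hperm, hsort⟩ : ∃ Ls : List ℕ, Ls.Perm L ∧ Ls.Pairwise (· ≥ ·) :=
      ⟨List.insertionSort (· ≥ ·) L, List.perm_insertionSort _ L,
        List.pairwise_insertionSort _ L⟩
    suffices h : ∃ R, AssignR m Ls R by
      obtain ⟨R, hR⟩ := h
      obtain ⟨R', hR', -⟩ := assign_perm hperm R hR
      exact ⟨R', hR'⟩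
    have h1s : ∀ x ∈ Ls, 1 ≤ x := fun x hx => h1 x (hperm.mem_iff.mp hx)
    have hlens : Ls.length ≤ m := hperm.length_eq ▸ h2
    have hsums : Ls.sum + Ls.length + 1 ≤ 3*m := by
      rw [hperm.sum_eq, hperm.length_eq]; exact h3
    clear hperm h1 h2 h3
    match Ls, hsort with
    | [], _ => exact ⟨[], rfl, by simp, by simp, fun j => by simp⟩
    | ℓ :: L₂, hsort =>
      rw [List.pairwise_cons] at hsort
      obtain ⟨hmax, hsort₂⟩ := hsort
      have hℓ1 : 1 ≤ ℓ := h1s ℓ (by simp)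
      have hm1 : 1 ≤ m := by simp at hsums; omega
      have h1t : ∀ x ∈ L₂, 1 ≤ x := fun x hx => h1s x (by simp [hx])
      simp only [List.sum_cons, List.length_cons] at hsums hlens
      rcases Nat.lt_or_ge ℓ 2 with hc1 | hc1
      · -- ℓ = 1 : all paths have length 1
        refine ⟨(List.range (L₂.length + 1)).map (fun j => [j]),
          by simp, ?_, ?_, fun j => ?_⟩
        · rw [flatten_map_singleton]; exact List.nodup_range
        · rw [flatten_map_singleton]
          intro r hr
          rw [List.mem_range] at hr; omega
        · rcases Nat.lt_or_ge j (L₂.length + 1) with hj | hj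
          · have hval : ((List.range (L₂.length + 1)).map (fun j => [j])).getD j [] = [j] := by
              rw [List.getD_eq_getElem?_getD]
              simp [List.getElem?_map, List.getElem?_range, hj]
            rw [hval]
            have hget : (ℓ :: L₂).getD j 0 = (ℓ :: L₂)[j]'(by simpa using hj) :=
              List.getD_eq_getElem _ _ (by simpa using hj)
            have hmem : (ℓ :: L₂)[j]'(by simpa using hj) ∈ ℓ :: L₂ := List.getElem_mem _
            have hle : (ℓ :: L₂).getD j 0 ≤ ℓ := by
              rw [hget]
              rcases List.mem_cons.mp hmem with h | h
              · omega
              · exact hmax _ h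
            have hcj : caps [j] = 2*j+1 := by simp [caps]
            omega
          · have h0 : (ℓ :: L₂).getD j 0 = 0 := List.getD_eq_default _ _ (by simpa using hj)
            rw [h0]; exact Nat.zero_le _
      · rcases Nat.lt_or_ge ℓ (2*m) with hc2 | hc2
        · -- 2 ≤ ℓ ≤ 2m-1 : one ball of radius m-1 covers the longest path
          obtain ⟨R₂, hlen₂, hnd₂, hbd₂, hcov₂⟩ :=
            ih (m-1) (by omega) L₂ h1t (by omega) (by omega)
          refine ⟨[m-1] :: R₂, by simp [hlen₂], ?_, ?_, fun j => ?_⟩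
          · simp only [List.flatten_cons, List.singleton_append, List.nodup_cons]
            exact ⟨fun hmem => by have := hbd₂ _ hmem; omega, hnd₂⟩
          · simp only [List.flatten_cons, List.singleton_append, List.mem_cons]
            rintro r (rfl | hr)
            · omega
            · have := hbd₂ _ hr; omega
          · cases j with
            | zero => simp [caps]; omega
            | succ j => simpa [List.getD_cons_succ] using hcov₂ j
        · -- ℓ ≥ 2m : radius m-1 ball burns 2m-1 vertices of the longest path
          have hm2 : 2 ≤ m := by omega
          have hlsum : L₂.length ≤ L₂.sum := length_le_sum L₂ h1t
          obtain ⟨R₃, hlen₃, hnd₃, hbd₃, hcov₃⟩ :=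
            ih (m-1) (by omega) ((ℓ - (2*m-1)) :: L₂)
              (by intro x hx
                  rcases List.mem_cons.mp hx with rfl | hx'
                  · omega
                  · exact h1t _ hx')
              (by simp; omega) (by simp; omega)
          match R₃, hlen₃ with
          | r₀ :: R₂, hlen₃ =>
            have hcovh := hcov₃ 0
            simp only [List.getD_cons_zero] at hcovh
            refine ⟨((m-1) :: r₀) :: R₂, by simpa using hlen₃, ?_, ?_, fun j => ?_⟩
            · simp only [List.flatten_cons, List.cons_append, List.nodup_cons]
              refine ⟨?_, by simpa [List.flatten_cons] using hnd₃⟩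
              intro hmem
              have := hbd₃ (m-1) (by simpa [List.flatten_cons] using hmem)
              omega
            · simp only [List.flatten_cons, List.cons_append, List.mem_cons]
              rintro r (rfl | hr)
              · omega
              · have := hbd₃ r (by simpa [List.flatten_cons] using hr); omega
            · cases j with
              | zero => simp only [List.getD_cons_zero, caps_cons]; omega
              | succ j => simpa [List.getD_cons_succ] using hcov₃ (j+1)

/-- Lay out balls with the given radii consecutively on a path, starting at `base`.
Returns a list of (radius, center) pairs. -/
def placements : List ℕ → ℕ → List (ℕ × ℕ)
  | [], _ => []
  | r :: t, base => (r, base + r) :: placements t (base + (2*r+1))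

lemma placements_fst : ∀ (rs : List ℕ) (base : ℕ),
    (placements rs base).map Prod.fst = rs := by
  intro rs
  induction rs with
  | nil => intro base; rfl
  | cons r t ih => intro base; simp [placements, ih]

lemma placements_cover : ∀ (rs : List ℕ) (base x : ℕ), base ≤ x → x < base + caps rs →
    ∃ p ∈ placements rs base, Nat.dist p.2 x ≤ p.1 := by
  intro rs
  induction rs with
  | nil => intro base x h1 h2; simp at h2; omega
  | cons r t ih =>
    intro base x h1 h2
    rcases Nat.lt_or_ge x (base + (2*r+1)) with hx | hx
    · exact ⟨(r, base + r), by simp [placements], by simp [Nat.dist]; omega⟩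
    · obtain ⟨p, hp1, hp2⟩ := ih (base + (2*r+1)) x hx (by simp [caps] at h2 ⊢; omega)
      exact ⟨p, by simp [placements, hp1], hp2⟩

/-- All (radius, path index, clamped center) triples for the assignment `R`. -/
def trips (L : List ℕ) : List (List ℕ) → ℕ → List (ℕ × ℕ × ℕ)
  | [], _ => []
  | rs :: R, j =>
      (placements rs 0).map (fun p => (p.1, j, min p.2 (L.getD j 0 - 1))) ++ trips L R (j+1)

lemma trips_fst (L : List ℕ) : ∀ (R : List (List ℕ)) (j : ℕ),
    (trips L R j).map Prod.fst = R.flatten := by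
  intro R
  induction R with
  | nil => intro j; rfl
  | cons rs R ih =>
    intro j
    have := placements_fst rs 0
    simp [trips, List.map_map, Function.comp_def, ih]
    simpa [Function.comp_def] using this

lemma trips_mem (L : List ℕ) : ∀ (R : List (List ℕ)) (j k : ℕ) (p : ℕ × ℕ),
    k < R.length → p ∈ placements (R.getD k []) 0 →
    (p.1, j + k, min p.2 (L.getD (j+k) 0 - 1)) ∈ trips L R j := by
  intro R
  induction R with
  | nil => intro j k p hk; simp at hk
  | cons rs R ih =>
    intro j k p hk hp
    cases k with
    | zero =>
      simp only [List.getD_cons_zero] at hp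
      exact List.mem_append_left _ (List.mem_map_of_mem hp)
    | succ k =>
      have := ih (j+1) k p (by simpa using hk) (by simpa [List.getD_cons_succ] using hp)
      apply List.mem_append_right
      simpa [Nat.add_assoc, Nat.add_comm 1 k] using this

lemma pathForest_walk {n : ℕ} (ll : Fin n → ℕ) (j : Fin n) :
    ∀ (d : ℕ) (a b : Fin (ll j)), a.val + d = b.val →
    ∃ w : (pathForest ll).Walk ⟨j,a⟩ ⟨j,b⟩, w.length = d := by
  intro d
  induction d with
  | zero =>
    intro a b h
    have : a = b := Fin.ext (by omega)
    subst this
    exact ⟨.nil, rfl⟩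
  | succ d ihd =>
    intro a b h
    have hb := b.isLt
    have ha' : a.val + 1 < ll j := by omega
    set a' : Fin (ll j) := ⟨a.val + 1, ha'⟩ with ha'def
    have hadj : (pathForest ll).Adj ⟨j,a⟩ ⟨j,a'⟩ := ⟨rfl, by simp [ha'def, Nat.dist]⟩
    obtain ⟨w, hw⟩ := ihd a' b (by simp [ha'def]; omega)
    exact ⟨.cons hadj w, by simp [hw]⟩

lemma pathForest_edist {n : ℕ} (ll : Fin n → ℕ) (j : Fin n) (a b : Fin (ll j)) :
    (pathForest ll).edist ⟨j,a⟩ ⟨j,b⟩ ≤ (Nat.dist a.val b.val : ℕ∞) := by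
  rcases le_total a.val b.val with h | h
  · obtain ⟨w, hw⟩ := pathForest_walk ll j (b.val - a.val) a b (by omega)
    calc (pathForest ll).edist ⟨j,a⟩ ⟨j,b⟩ ≤ (w.length : ℕ∞) := w.edist_le
    _ = ((b.val - a.val : ℕ) : ℕ∞) := by rw [hw]
    _ ≤ (Nat.dist a.val b.val : ℕ∞) := by
        have : b.val - a.val ≤ Nat.dist a.val b.val := by simp [Nat.dist]
        exact_mod_cast this
  · obtain ⟨w, hw⟩ := pathForest_walk ll j (a.val - b.val) b a (by omega)
    calc (pathForest ll).edist ⟨j,a⟩ ⟨j,b⟩ = (pathForest ll).edist ⟨j,b⟩ ⟨j,a⟩ :=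
          SimpleGraph.edist_comm
    _ ≤ (w.length : ℕ∞) := w.edist_le
    _ = ((a.val - b.val : ℕ) : ℕ∞) := by rw [hw]
    _ ≤ (Nat.dist a.val b.val : ℕ∞) := by
        have : a.val - b.val ≤ Nat.dist a.val b.val := by simp [Nat.dist]
        exact_mod_cast this

/-- A path forest with `n ≥ 1` paths and order at most `3m - 1 - n` (for `m ≥ n`)
is `m`-burnable. -/
theorem stmt3 (m n : ℕ) (hn : 1 ≤ n) (hm : n ≤ m) (l : Fin n → ℕ)
    (hl : ∀ i, 1 ≤ l i)
    (horder : ∑ i, l i ≤ 3 * m - 1 - n) :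
    IsBurnable (pathForest l) m := by
  classical
  set L := List.ofFn l with hLdef
  have hLlen : L.length = n := List.length_ofFn
  have hLsum : L.sum = ∑ i, l i := List.sum_ofFn
  have hL1 : ∀ x ∈ L, 1 ≤ x := by
    intro x hx
    obtain ⟨i, hi⟩ := List.mem_ofFn.mp hx
    exact hi ▸ hl i
  have hsumge : n ≤ ∑ i, l i := by
    calc n = ∑ _i : Fin n, 1 := by simp
    _ ≤ _ := Finset.sum_le_sum fun i _ => hl i
  obtain ⟨R, hlenR, hnd, hbd, hcov⟩ := assign_main m L hL1 (by omega)
    (by rw [hLsum, hLlen]; omega)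
  set T := trips L R 0 with hTdef
  have hTfst : T.map Prod.fst = R.flatten := trips_fst L R 0
  have v0 : (Σ i : Fin n, Fin (l i)) := ⟨⟨0, hn⟩, ⟨0, hl ⟨0, hn⟩⟩⟩
  refine ⟨fun i => (T.find? (fun t => t.1 == i.val)).elim v0
    (fun t => if h1 : t.2.1 < n then
      (if h2 : t.2.2 < l ⟨t.2.1, h1⟩ then ⟨⟨t.2.1, h1⟩, ⟨t.2.2, h2⟩⟩ else v0) else v0), ?_⟩
  rintro ⟨j, x⟩
  have hjR : (j : ℕ) < R.length := by rw [hlenR, hLlen]; exact j.isLt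
  have hLj : L.getD j.val 0 = l j := by
    rw [List.getD_eq_getElem _ _ (by rw [hLlen]; exact j.isLt)]
    simp [hLdef]
  have hcapj := hcov j.val
  rw [hLj] at hcapj
  have hxlt : x.val < caps (R.getD j.val []) := lt_of_lt_of_le x.isLt hcapj
  obtain ⟨p, hp, hpd⟩ := placements_cover (R.getD j.val []) 0 x.val (Nat.zero_le _)
    (by omega)
  have hLj' : L[(j:ℕ)]?.getD 0 = l j := by
    rw [← List.getD_eq_getElem?_getD]; exact hLj
  have ht0 : (p.1, j.val, min p.2 (l j - 1)) ∈ T := by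
    have := trips_mem L R 0 j.val p hjR hp
    rw [hTdef]
    simpa [hLj'] using this
  have hrflat : p.1 ∈ R.flatten := by
    refine List.mem_flatten.mpr ⟨R.getD j.val [], ?_, ?_⟩
    · rw [List.getD_eq_getElem _ _ hjR]; exact List.getElem_mem _
    · rw [← placements_fst (R.getD j.val []) 0]; exact List.mem_map_of_mem hp
  have hrm : p.1 < m := hbd _ hrflat
  refine ⟨⟨p.1, hrm⟩, ?_⟩
  obtain ⟨t, hfeq⟩ : ∃ t, T.find? (fun t => t.1 == p.1) = some t := by
    rw [← Option.isSome_iff_exists, List.find?_isSome]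
    exact ⟨_, ht0, by simp⟩
  have htmem : t ∈ T := List.mem_of_find?_eq_some hfeq
  have htfst : t.1 = p.1 := by simpa using List.find?_some hfeq
  have hteq : t = (p.1, j.val, min p.2 (l j - 1)) :=
    List.inj_on_of_nodup_map (hTfst ▸ hnd) htmem ht0 (by rw [htfst])
  rw [hteq] at hfeq
  have hcc : min p.2 (l j - 1) < l j := by have := hl j; omega
  have hd2 : Nat.dist (min p.2 (l j - 1)) x.val ≤ p.1 := by
    have hxl := x.isLt
    simp only [Nat.dist] at hpd ⊢
    omega
  have hkey : (pathForest l).edist ⟨j, ⟨min p.2 (l j - 1), hcc⟩⟩ ⟨j, x⟩ ≤ ((p.1 : ℕ) : ℕ∞) := by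
    refine le_trans (pathForest_edist l j ⟨min p.2 (l j - 1), hcc⟩ x) ?_
    exact_mod_cast hd2
  simp only [Fin.val_mk]
  rw [hfeq]
  simp only [Option.elim_some]
  rw [dif_pos (show (j:ℕ) < n from j.isLt)]
  rw [dif_pos (show min p.2 (l j - 1) < l ⟨(j:ℕ), j.isLt⟩ from by simpa using hcc)]
  exact hkey
end

section
/- For every m ≥ 2, the balanced m-spider in which every one of its m arms has length exactly m (so the spider has order m² + 1) is not m-burnable. -/
/-- A 1-Lipschitz potential gives a lower bound on graph edistance. -/
lemma potential_le_edist {V : Type*} (G : SimpleGraph V) (φ : V → ℤ)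
    (hφ : ∀ u v, G.Adj u v → φ v ≤ φ u + 1) (x y : V) (d : ℕ)
    (hd : (d : ℤ) ≤ φ y - φ x) : (d : ℕ∞) ≤ G.edist x y := by
  have key : ∀ {a b : V} (w : G.Walk a b), φ b - φ a ≤ (w.length : ℤ) := by
    intro a b w
    induction w with
    | nil => simp
    | cons h p ih =>
      have := hφ _ _ h
      rw [SimpleGraph.Walk.length_cons]
      push_cast
      linarith
  rcases eq_or_ne (G.edist x y) ⊤ with h | h
  · simp [h]
  · obtain ⟨p, hp⟩ := G.exists_walk_of_edist_ne_top h
    rw [← hp]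
    have h1 : (d : ℤ) ≤ (p.length : ℤ) := le_trans hd (key p)
    exact_mod_cast Nat.cast_le.mpr (by exact_mod_cast h1)

/-- The balanced `m`-spider whose `m` arms all have length `m` is not `m`-burnable. -/
theorem stmt6 (m : ℕ) (hm : 2 ≤ m) :
    ¬ IsBurnable (spider (fun _ : Fin m => m)) m := by
  rintro ⟨f, hf⟩
  set G := spider (fun _ : Fin m => m) with hG
  -- potential function centered on arm A
  have hmpos : 0 < m := by omega
  let φ : Fin m → Option (Σ _ : Fin m, Fin m) → ℤ := fun A v =>
    match v with
    | none => 0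
    | some ⟨i, a⟩ => if i = A then (a : ℤ) + 1 else -((a : ℤ) + 1)
  have hlip : ∀ A : Fin m, ∀ u v, G.Adj u v → φ A v ≤ φ A u + 1 := by
    rintro A (_ | ⟨i, a⟩) (_ | ⟨j, b⟩) h
    · exact absurd h (G.loopless.irrefl none)
    · -- none, some
      have hb : b.val = 0 := h
      simp only [φ]
      split <;> simp [hb]
    · -- some, none
      have ha : a.val = 0 := h
      simp only [φ]
      split <;> simp [ha]
    · obtain ⟨hij, hd⟩ := h
      have hd1 : b.val ≤ a.val + 1 := by simp [Nat.dist] at hd; omega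
      have hd2 : a.val ≤ b.val + 1 := by simp [Nat.dist] at hd; omega
      cases hij
      simp only [φ]
      rcases eq_or_ne i A with h | h
      · simp only [if_pos h]; omega
      · simp only [if_neg h]; omega
  -- leaves
  have hlt : m - 1 < m := by omega
  let leaf : Fin m → Option (Σ _ : Fin m, Fin m) := fun j => some ⟨j, ⟨m - 1, hlt⟩⟩
  -- L1 : any vertex within distance m-1 of leaf j lies on arm j
  have L1 : ∀ (x : Option (Σ _ : Fin m, Fin m)) (j : Fin m),
      G.edist x (leaf j) ≤ ((m - 1 : ℕ) : ℕ∞) → ∃ c : Fin m, x = some ⟨j, c⟩ := by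
    intro x j hx
    match x with
    | none =>
      exfalso
      have hb : ((m : ℕ) : ℕ∞) ≤ G.edist none (leaf j) := by
        apply potential_le_edist G (φ j) (hlip j)
        simp only [φ, leaf, if_pos rfl]
        push_cast
        omega
      have : ((m : ℕ) : ℕ∞) ≤ ((m - 1 : ℕ) : ℕ∞) := le_trans hb hx
      rw [Nat.cast_le] at this
      omega
    | some ⟨j', c⟩ =>
      rcases eq_or_ne j' j with rfl | hne
      · exact ⟨c, rfl⟩
      · exfalso
        have hb : ((m : ℕ) : ℕ∞) ≤ G.edist (some ⟨j', c⟩) (leaf j) := by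
          apply potential_le_edist G (φ j) (hlip j)
          simp only [φ, leaf, if_pos rfl, if_neg hne]
          push_cast
          omega
        have : ((m : ℕ) : ℕ∞) ≤ ((m - 1 : ℕ) : ℕ∞) := le_trans hb hx
        rw [Nat.cast_le] at this
        omega
  -- for each arm, pick a ball covering its leaf
  have hcov : ∀ j : Fin m, ∃ i : Fin m, G.edist (f i) (leaf j) ≤ (i.val : ℕ∞) :=
    fun j => hf (leaf j)
  choose g hg using hcov
  have hle : ∀ i : Fin m, ((i.val : ℕ) : ℕ∞) ≤ ((m - 1 : ℕ) : ℕ∞) := by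
    intro i
    rw [Nat.cast_le]
    omega
  have harm : ∀ j : Fin m, ∃ c : Fin m, f (g j) = some ⟨j, c⟩ :=
    fun j => L1 (f (g j)) j (le_trans (hg j) (hle (g j)))
  have ginj : Function.Injective g := by
    intro j j' hjj
    obtain ⟨c, hc⟩ := harm j
    obtain ⟨c', hc'⟩ := harm j'
    rw [hjj, hc'] at hc
    exact (Sigma.mk.inj_iff.mp (Option.some_injective _ hc)).1.symm
  have gsurj : Function.Surjective g := Finite.surjective_of_injective ginj
  -- the vertex at depth m-2 on the arm whose leaf is burned by ball 0
  obtain ⟨A, hA⟩ := gsurj ⟨0, hmpos⟩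
  have hlt2 : m - 2 < m := by omega
  obtain ⟨i, hi⟩ := hf (some ⟨A, ⟨m - 2, hlt2⟩⟩)
  obtain ⟨j, rfl⟩ := gsurj i
  rcases eq_or_ne j A with rfl | hne
  · -- ball covering leaf A is ball 0, located at the leaf; can't reach depth m-2
    have hgA := hg j
    rw [hA] at hgA
    have hfa : f ⟨0, hmpos⟩ = leaf j := by
      have h0 : G.edist (f ⟨0, hmpos⟩) (leaf j) = 0 := le_antisymm (by simpa using hgA) zero_le
      exact SimpleGraph.edist_eq_zero_iff.mp h0
    rw [hA, hfa] at hi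
    have h0' : G.edist (leaf j) (some ⟨j, ⟨m - 2, hlt2⟩⟩) = 0 :=
      le_antisymm (by simpa using hi) zero_le
    have h2 : (leaf j : Option (Σ _ : Fin m, Fin m)) = some ⟨j, ⟨m - 2, hlt2⟩⟩ :=
      SimpleGraph.edist_eq_zero_iff.mp h0'
    simp only [leaf, Option.some.injEq, Sigma.mk.inj_iff, heq_eq_eq, Fin.mk.injEq] at h2
    omega
  · -- ball g j sits on arm j ≠ A, too far from arm A's depth-(m-2) vertex
    obtain ⟨c, hc⟩ := harm j
    rw [hc] at hi
    have hb : ((m : ℕ) : ℕ∞) ≤ G.edist (some ⟨j, c⟩) (some ⟨A, ⟨m - 2, hlt2⟩⟩) := by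
      apply potential_le_edist G (φ A) (hlip A)
      simp only [φ, if_pos rfl, if_neg hne]
      push_cast
      omega
    have h1 : ((m : ℕ) : ℕ∞) ≤ (((g j).val : ℕ) : ℕ∞) := le_trans hb hi
    rw [Nat.cast_le] at h1
    have := (g j).isLt
    omega
end

section
/- Let n ≥ 2 and m > n. There exists an n-spider of order m² + n - 1 that is not m-burnable; namely, the n-spider with one arm of length m² - 1 and n - 1 arms of length 1. -/
lemma walk_lip {V : Type*} {G : SimpleGraph V} (c : V → ℕ)
    (hc : ∀ u v, G.Adj u v → c u ≤ c v + 1) :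
    ∀ {u v : V} (w : G.Walk u v), c u ≤ c v + w.length := by
  intro u v w
  induction w with
  | nil => simp
  | cons h p ih =>
    simp only [SimpleGraph.Walk.length_cons]
    have := hc _ _ h
    omega

lemma edist_lip {V : Type*} {G : SimpleGraph V} (c : V → ℕ)
    (hc : ∀ u v, G.Adj u v → c u ≤ c v + 1) {u v : V} {k : ℕ}
    (h : G.edist u v ≤ (k : ℕ∞)) : c u ≤ c v + k ∧ c v ≤ c u + k := by
  have hne : G.edist u v ≠ ⊤ := by
    intro ht; rw [ht] at h; simp at h
  obtain ⟨p, hp⟩ := SimpleGraph.exists_walk_of_edist_ne_top hne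
  have hlen : (p.length : ℕ∞) ≤ (k : ℕ∞) := by rw [hp]; exact h
  have hlen' : p.length ≤ k := by exact_mod_cast hlen
  have h1 := walk_lip c hc p
  have h2 := walk_lip c hc p.reverse
  simp only [SimpleGraph.Walk.length_reverse] at h2
  constructor <;> omega

lemma sum_odd (m : ℕ) : ∑ i ∈ Finset.range m, (2 * i + 1) = m ^ 2 := by
  induction m with
  | zero => simp
  | succ k ih => rw [Finset.sum_range_succ, ih]; ring

/-- For `m > n`, the `n`-spider with one arm of length `m² - 1` and `n - 1`
arms of length `1` has order `m² + n - 1` and is not `m`-burnable. -/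
theorem stmt8 (m n : ℕ) (hn : 2 ≤ n) (hm : n < m) :
    1 + ∑ i, (fun i : Fin n => if i.val = 0 then m ^ 2 - 1 else 1) i = m ^ 2 + n - 1 ∧
    ¬ IsBurnable (spider (fun i : Fin n => if i.val = 0 then m ^ 2 - 1 else 1)) m := by
  haveI : NeZero n := ⟨by omega⟩
  have hm3 : 3 ≤ m := by omega
  have h9 : 9 ≤ m ^ 2 := by nlinarith
  set l : Fin n → ℕ := fun i : Fin n => if i.val = 0 then m ^ 2 - 1 else 1 with hl
  constructor
  · -- order computation
    have : ∑ i, l i = (m ^ 2 - 2) + n := by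
      have : ∀ i : Fin n, l i = (if i = (0 : Fin n) then m ^ 2 - 2 else 0) + 1 := by
        intro i
        by_cases h : i = 0
        · subst h; simp [hl]; omega
        · have : i.val ≠ 0 := by
            intro hv; exact h (Fin.ext (by simp [hv]))
          simp [hl, this, h]
      rw [Finset.sum_congr rfl (fun i _ => this i), Finset.sum_add_distrib,
        Finset.sum_ite_eq' Finset.univ (0 : Fin n) (fun _ => m ^ 2 - 2)]
      simp
    simp only [this]
    have h' : ∑ x : Fin n, (if (x:ℕ) = 0 then m ^ 2 - 1 else 1) = (m ^ 2 - 2) + n := this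
    omega
  · rintro ⟨f, hf⟩
    -- coordinate function
    set c : Option (Σ i : Fin n, Fin (l i)) → ℕ :=
      fun v => Option.elim v 1 (fun p => if p.1.val = 0 then p.2.val + 2 else 0) with hcdef
    have hlip : ∀ u v, (spider l).Adj u v → c u ≤ c v + 1 := by
      rintro (_ | ⟨i, j⟩) (_ | ⟨i', j'⟩) h
      · exact absurd h (by simp [spider])
      · have hb : j'.val = 0 := h
        simp only [hcdef, Option.elim]
        split_ifs <;> omega
      · simp only [hcdef, Option.elim]
        have ha : j.val = 0 := h
        split_ifs <;> omega
      · obtain ⟨h1, h2⟩ := (show i = i' ∧ Nat.dist j.val j'.val = 1 from h)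
        simp only [Nat.dist] at h2
        simp only [hcdef, Option.elim]
        have : i.val = i'.val := by rw [h1]
        split_ifs <;> omega
    set a : Fin m → ℕ := fun i => c (f i) with hadef
    -- the short leaf
    have hl1 : l ⟨1, by omega⟩ = 1 := by simp [hl]
    set s : Option (Σ i : Fin n, Fin (l i)) :=
      some ⟨⟨1, by omega⟩, ⟨0, by omega⟩⟩ with hsdef
    have hcs : c s = 0 := by simp [hcdef, hsdef]
    obtain ⟨i0, hi0⟩ := hf s
    have hai0 : a i0 ≤ i0.val := by
      have := (edist_lip c hlip hi0).1
      rw [hcs] at this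
      simp only [hadef]
      omega
    -- coverage of the long path coordinates
    have hsub : Finset.Icc 1 (m ^ 2) ⊆
        Finset.univ.biUnion (fun i : Fin m =>
          (Finset.Icc (a i - i.val) (a i + i.val)) ∩ Finset.Icc 1 (m ^ 2)) := by
      intro x hx
      rw [Finset.mem_Icc] at hx
      obtain ⟨hx1, hx2⟩ := hx
      -- the vertex with coordinate x
      have hv : ∃ v, c v = x := by
        by_cases h1 : x = 1
        · exact ⟨none, by simp [hcdef, h1]⟩
        · refine ⟨some ⟨⟨0, by omega⟩, ⟨x - 2, ?_⟩⟩, ?_⟩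
          · simp only [hl]; simp; omega
          · simp [hcdef]; omega
      obtain ⟨v, hcv⟩ := hv
      obtain ⟨i, hi⟩ := hf v
      have := edist_lip c hlip hi
      rw [hcv] at this
      rw [Finset.mem_biUnion]
      refine ⟨i, Finset.mem_univ i, ?_⟩
      rw [Finset.mem_inter, Finset.mem_Icc, Finset.mem_Icc]
      simp only [hadef]
      omega
    have hcount : m ^ 2 ≤ ∑ i : Fin m,
        ((Finset.Icc (a i - i.val) (a i + i.val)) ∩ Finset.Icc 1 (m ^ 2)).card := by
      calc m ^ 2 = (Finset.Icc 1 (m ^ 2)).card := by simp [Nat.card_Icc]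
        _ ≤ _ := Finset.card_le_card hsub
        _ ≤ _ := Finset.card_biUnion_le
    have hlt : ∑ i : Fin m,
        ((Finset.Icc (a i - i.val) (a i + i.val)) ∩ Finset.Icc 1 (m ^ 2)).card
        < ∑ i : Fin m, (2 * i.val + 1) := by
      apply Finset.sum_lt_sum
      · intro i _
        calc ((Finset.Icc (a i - i.val) (a i + i.val)) ∩ Finset.Icc 1 (m ^ 2)).card
            ≤ (Finset.Icc (a i - i.val) (a i + i.val)).card :=
              Finset.card_le_card Finset.inter_subset_left
          _ = a i + i.val + 1 - (a i - i.val) := Nat.card_Icc _ _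
          _ ≤ 2 * i.val + 1 := by omega
      · refine ⟨i0, Finset.mem_univ i0, ?_⟩
        calc ((Finset.Icc (a i0 - i0.val) (a i0 + i0.val)) ∩ Finset.Icc 1 (m ^ 2)).card
            ≤ (Finset.Icc 1 (a i0 + i0.val)).card := by
              apply Finset.card_le_card
              intro x hx
              rw [Finset.mem_inter, Finset.mem_Icc, Finset.mem_Icc] at hx
              rw [Finset.mem_Icc]
              omega
          _ = a i0 + i0.val + 1 - 1 := Nat.card_Icc _ _
          _ < 2 * i0.val + 1 := by omega
    have hsum : ∑ i : Fin m, (2 * i.val + 1) = m ^ 2 := by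
      rw [Fin.sum_univ_eq_sum_range (fun i => 2 * i + 1)]
      exact sum_odd m
    omega
end

section
/- Let m ≥ n ≥ 2 and let T be a path forest with n paths of total order at most m² - (n-1)² + 1. Then T is m-burnable, unless T has order exactly m² - (n-1)² + 1 and T is the path forest with path orders m² - n² + 2 together with n - 1 paths of order 2. -/
lemma capRange (t : ℕ) : ∑ r ∈ Finset.range t, (2*r+1) = t^2 := by
  induction t with
  | zero => simp
  | succ t ih => rw [Finset.sum_range_succ, ih]; ring

lemma capIco (a b : ℕ) (h : a ≤ b) : ∑ r ∈ Finset.Ico a b, (2*r+1) = b^2 - a^2 := by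
  have h2 : ∑ r ∈ Finset.range a, (2*r+1) + ∑ r ∈ Finset.Ico a b, (2*r+1)
      = ∑ r ∈ Finset.range b, (2*r+1) := by
    rw [Finset.range_eq_Ico, Finset.range_eq_Ico]
    exact Finset.sum_Ico_consecutive (fun r => 2*r+1) (Nat.zero_le a) h
  rw [capRange, capRange] at h2
  omega

lemma coverFinset (S : Finset ℕ) : ∀ p : ℕ, 1 ≤ p → p ≤ ∑ r ∈ S, (2*r+1) →
    ∃ c : ℕ → ℕ, (∀ r, c r < p) ∧ ∀ a < p, ∃ r ∈ S, Nat.dist (c r) a ≤ r := by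
  induction S using Finset.cons_induction with
  | empty => intro p hp hs; simp at hs; omega
  | cons r₀ S' hr₀ ih =>
    intro p hp hs
    rw [Finset.sum_cons] at hs
    by_cases hc : p ≤ 2*r₀+1
    · refine ⟨fun _ => min r₀ (p-1), fun r => Nat.lt_of_le_of_lt (min_le_right _ _) (by omega), fun a ha => ⟨r₀, Finset.mem_cons_self _ _, ?_⟩⟩
      simp [Nat.dist]; omega
    · obtain ⟨c', hc1, hc2⟩ := ih (p - (2*r₀+1)) (by omega) (by omega)
      refine ⟨fun r => if r = r₀ then r₀ else c' r + (2*r₀+1), fun r => ?_, fun a ha => ?_⟩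
      · by_cases h : r = r₀ <;> simp [h] <;> [omega; exact (by have := hc1 r; omega)]
      · by_cases h2 : a ≤ 2*r₀
        · exact ⟨r₀, Finset.mem_cons_self _ _, by simp [Nat.dist]; omega⟩
        · obtain ⟨r, hrS, hrd⟩ := hc2 (a - (2*r₀+1)) (by omega)
          refine ⟨r, Finset.mem_cons.2 (Or.inr hrS), ?_⟩
          have hne : r ≠ r₀ := fun h => hr₀ (h ▸ hrS)
          simp [hne, Nat.dist] at hrd ⊢
          omega

lemma adj_edist_le_one {V : Type*} {G : SimpleGraph V} {u v : V} (h : G.Adj u v) :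
    G.edist u v ≤ 1 := by
  have := SimpleGraph.edist_le (SimpleGraph.Walk.cons h SimpleGraph.Walk.nil)
  simpa using this

lemma pathForest_step {n : ℕ} (l : Fin n → ℕ) (i : Fin n) :
    ∀ (k : ℕ) (x y : Fin (l i)), y.val = x.val + k →
      (pathForest l).edist ⟨i, x⟩ ⟨i, y⟩ ≤ (k : ℕ∞) := by
  intro k
  induction k with
  | zero =>
    intro x y h
    have : x = y := Fin.ext (by omega)
    simp [this]
  | succ k ih =>
    intro x y h
    have hm : (x.val + k) < l i := by have := y.isLt; omega
    have h1 : (pathForest l).Adj ⟨i, ⟨x.val + k, hm⟩⟩ ⟨i, y⟩ :=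
      ⟨rfl, by simp [Nat.dist]; omega⟩
    have h2 := ih x ⟨x.val + k, hm⟩ rfl
    have h3 := adj_edist_le_one h1
    calc (pathForest l).edist ⟨i, x⟩ ⟨i, y⟩
        ≤ (pathForest l).edist ⟨i, x⟩ ⟨i, ⟨x.val+k, hm⟩⟩
          + (pathForest l).edist ⟨i, ⟨x.val+k, hm⟩⟩ ⟨i, y⟩ := SimpleGraph.edist_triangle
      _ ≤ (k : ℕ∞) + 1 := add_le_add h2 h3
      _ = ((k+1 : ℕ) : ℕ∞) := by push_cast; ring

lemma pathForest_edist_le {n : ℕ} (l : Fin n → ℕ) (i : Fin n) (x y : Fin (l i)) :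
    (pathForest l).edist ⟨i, x⟩ ⟨i, y⟩ ≤ (Nat.dist x.val y.val : ℕ∞) := by
  rcases le_total x.val y.val with h | h
  · have hd : Nat.dist x.val y.val = y.val - x.val := by simp [Nat.dist]; omega
    rw [hd]
    exact pathForest_step l i (y.val - x.val) x y (by omega)
  · have hd : Nat.dist x.val y.val = x.val - y.val := by simp [Nat.dist]; omega
    rw [hd, SimpleGraph.edist_comm]
    exact pathForest_step l i (x.val - y.val) y x (by omega)

def AllocS (m n : ℕ) (l : Fin n → ℕ) : Prop :=
  ∃ S : Fin n → Finset ℕ,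
    (∀ i, ∀ r ∈ S i, r < m) ∧
    (∀ i j, i ≠ j → Disjoint (S i) (S j)) ∧
    (∀ i, l i ≤ ∑ r ∈ S i, (2 * r + 1))

lemma allocS_isBurnable (m n : ℕ) (hn : 0 < n) (l : Fin n → ℕ) (hl : ∀ i, 1 ≤ l i)
    (h : AllocS m n l) : IsBurnable (pathForest l) m := by
  classical
  obtain ⟨S, hbd, hdisj, hsum⟩ := h
  choose c hc1 hc2 using fun i => coverFinset (S i) (l i) (hl i) (hsum i)
  have hv : (0 : ℕ) < l ⟨0, hn⟩ := hl _
  refine ⟨fun r => if h : ∃ i, r.val ∈ S i then ⟨h.choose, ⟨c h.choose r.val, hc1 _ _⟩⟩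
    else ⟨⟨0, hn⟩, ⟨0, hv⟩⟩, ?_⟩
  rintro ⟨i, a⟩
  obtain ⟨r, hrS, hrd⟩ := hc2 i a.val a.isLt
  have hrm : r < m := hbd i r hrS
  refine ⟨⟨r, hrm⟩, ?_⟩
  have hex : ∃ j, (r : ℕ) ∈ S j := ⟨i, hrS⟩
  have hje : hex.choose = i := by
    by_contra hne
    exact (Finset.disjoint_left.1 (hdisj _ _ hne) hex.choose_spec) hrS
  subst hje
  simp only [dif_pos hex]
  refine le_trans (pathForest_edist_le l _ _ a) ?_
  exact_mod_cast hrd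

lemma allocS_core (m : ℕ) : ∀ (n : ℕ) (l : Fin n → ℕ), 1 ≤ n → n ≤ m → (∀ i, 1 ≤ l i) →
    (∑ i, l i) + (n-1)^2 ≤ m^2 + 1 →
    (¬ ∃ i, l i + n^2 = m^2 + 2 ∧ ∀ j, j ≠ i → l j = 2) → AllocS m n l := by
  induction m using Nat.strong_induction_on with
  | _ m IH =>
  intro n l hn hnm hl hsum hexc
  haveI : Nonempty (Fin n) := ⟨⟨0, hn⟩⟩
  obtain ⟨i₀, hmax⟩ := Finite.exists_max l
  by_cases hC : l i₀ ≤ 2*(m-n)+1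
  · -- Case C : every path is small, one radius each
    refine ⟨fun i => {m - n + i.val}, ?_, ?_, ?_⟩
    · intro i r hr
      simp only [Finset.mem_singleton] at hr
      subst hr
      have := i.isLt
      omega
    · intro i j hij
      have : i.val ≠ j.val := fun h => hij (Fin.ext h)
      simp only [Finset.disjoint_singleton]
      omega
    · intro i
      rw [Finset.sum_singleton]
      have := hmax i
      omega
  by_cases hB : l i₀ ≤ 2*m-1
  · -- Case B : cover the max path with radius m-1, recurse on the rest
    have hn2 : 2 ≤ n := by omega
    obtain ⟨n'', rfl⟩ : ∃ k, n = k + 2 := ⟨n - 2, by omega⟩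
    obtain ⟨m', rfl⟩ : ∃ k, m = k + 1 := ⟨m - 1, by omega⟩
    have hm'n : n'' + 1 ≤ m' := by omega
    have hsumsplit := Fin.sum_univ_succAbove l i₀
    have key : AllocS m' (n''+1) (fun j => l (i₀.succAbove j)) := by
      apply IH m' (by omega) (n''+1) _ (by omega) hm'n (fun j => hl _)
      · -- sum bound
        have e1 : (m'+1)^2 = m'*m' + 2*m' + 1 := by ring
        have e2 : (n''+2-1)^2 = n''*n'' + 2*n'' + 1 := by
          rw [show n''+2-1 = n''+1 from rfl]; ring
        have e3 : (n''+1-1)^2 = n''*n'' := by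
          rw [show n''+1-1 = n'' from rfl]; ring
        have e4 : m'^2 = m'*m' := by ring
        rw [hsumsplit, e2, e1] at hsum
        rw [e3, e4]
        generalize m'*m' = A at hsum ⊢
        generalize n''*n'' = B at hsum ⊢
        omega
      · -- non-exceptional
        rintro ⟨j, hj1, hj2⟩
        have hsum2 : ∑ k : Fin (n''+1), l (i₀.succAbove k) = l (i₀.succAbove j) + 2*n'' := by
          rw [Fin.sum_univ_succAbove (fun k => l (i₀.succAbove k)) j]
          congr 1
          rw [Finset.sum_congr rfl (fun k _ => hj2 (j.succAbove k) (Fin.succAbove_ne j k))]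
          simp [mul_comm]
        obtain ⟨d, hd⟩ : ∃ d, m' = n''+1+d := ⟨m'-(n''+1), by omega⟩
        subst hd
        have hdd : d ≤ d*d := by
          rcases Nat.eq_zero_or_pos d with h|h
          · simp [h]
          · exact Nat.le_mul_of_pos_left d h
        have f1 : (n''+1+d+1)^2 = n''*n'' + 2*(n''*d) + d*d + 4*n'' + 4*d + 4 := by ring
        have f2 : (n''+1+d)^2 = n''*n'' + 2*(n''*d) + d*d + 2*n'' + 2*d + 1 := by ring
        have f3 : (n''+1)^2 = n''*n'' + 2*n'' + 1 := by ring
        have e2 : (n''+2-1)^2 = n''*n'' + 2*n'' + 1 := by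
          rw [show n''+2-1 = n''+1 from rfl]; ring
        rw [hsumsplit, hsum2, e2, f1] at hsum
        rw [f3, f2] at hj1
        have hmaxj := hmax (i₀.succAbove j)
        have hd0 : d = 0 := by
          generalize n''*n'' = A at hsum hj1
          generalize n''*d = B at hsum hj1
          generalize d*d = C at hsum hj1 hdd
          omega
        subst hd0
        have hlj : l (i₀.succAbove j) = 2 := by omega
        have hli₀ : l i₀ = 2 := by omega
        refine hexc ⟨i₀, ?_, ?_⟩
        · rw [hli₀]; ring
        · intro j' hj'
          obtain ⟨k, rfl⟩ := Fin.exists_succAbove_eq hj'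
          rcases eq_or_ne k j with rfl | hk
          · exact hlj
          · exact hj2 k hk
    obtain ⟨S', hb', hdisj', hs'⟩ := key
    refine ⟨i₀.insertNth {m'} S', ?_, ?_, ?_⟩
    · intro i r hr
      rcases eq_or_ne i i₀ with rfl | h
      · rw [Fin.insertNth_apply_same] at hr
        simp only [Finset.mem_singleton] at hr
        omega
      · obtain ⟨k, rfl⟩ := Fin.exists_succAbove_eq h
        rw [Fin.insertNth_apply_succAbove] at hr
        have := hb' k r hr
        omega
    · intro i j hij
      rcases eq_or_ne i i₀ with rfl | hi
      · obtain ⟨k, rfl⟩ := Fin.exists_succAbove_eq (Ne.symm hij)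
        rw [Fin.insertNth_apply_same, Fin.insertNth_apply_succAbove]
        exact Finset.disjoint_singleton_left.2 (fun h => lt_irrefl _ (hb' k m' h))
      · obtain ⟨k, rfl⟩ := Fin.exists_succAbove_eq hi
        rcases eq_or_ne j i₀ with rfl | hj
        · rw [Fin.insertNth_apply_same, Fin.insertNth_apply_succAbove]
          exact Finset.disjoint_singleton_right.2 (fun h => lt_irrefl _ (hb' k m' h))
        · obtain ⟨k', rfl⟩ := Fin.exists_succAbove_eq hj
          rw [Fin.insertNth_apply_succAbove, Fin.insertNth_apply_succAbove]
          exact hdisj' k k' (fun h => hij (by rw [h]))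
    · intro i
      rcases eq_or_ne i i₀ with rfl | h
      · rw [Fin.insertNth_apply_same, Finset.sum_singleton]
        omega
      · obtain ⟨k, rfl⟩ := Fin.exists_succAbove_eq h
        rw [Fin.insertNth_apply_succAbove]
        exact hs' k

  · -- Case A : l i₀ ≥ 2*m
    have hA : 2*m ≤ l i₀ := by omega
    obtain ⟨n', rfl⟩ : ∃ k, n = k+1 := ⟨n-1, by omega⟩
    have hsplit := Fin.sum_univ_succAbove l i₀
    have hrest : n' ≤ ∑ k : Fin n', l (i₀.succAbove k) := by
      calc n' = ∑ _k : Fin n', 1 := by simp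
      _ ≤ _ := Finset.sum_le_sum (fun k _ => hl _)
    have hm2 : 2 ≤ m := by
      by_contra hcon
      have hm1 : m = 1 := by omega
      subst hm1
      have hn0 : n' = 0 := by omega
      subst hn0
      norm_num at hsum
      simp only [Finset.univ_eq_empty, Finset.sum_empty] at hsplit
      refine hexc ⟨i₀, ?_, fun j hj =>
        absurd (Fin.ext (by have := j.isLt; have := i₀.isLt; omega : j.val = i₀.val)) hj⟩
      norm_num
      omega
    obtain ⟨m', rfl⟩ : ∃ k, m = k+1 := ⟨m-1, by omega⟩
    have hmn : n'+1 ≤ m' := by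
      by_contra hcon
      have hm'n' : m' = n' := by omega
      subst hm'n'
      have g1 : (m'+1)^2 = m'*m'+2*m'+1 := by ring
      have g2 : (m'+1-1)^2 = m'*m' := by rw [show m'+1-1 = m' from rfl]; ring
      rw [hsplit, g2, g1] at hsum
      generalize m'*m' = A at hsum
      omega
    set lr := Function.update l i₀ (l i₀ - (2*m'+1)) with hlr
    have hlri₀ : lr i₀ = l i₀ - (2*m'+1) := by rw [hlr, Function.update_self]
    have hlrj : ∀ j, j ≠ i₀ → lr j = l j := fun j hj => by
      rw [hlr, Function.update_of_ne hj]
    by_cases hexc' : ∃ i, lr i + (n'+1)^2 = m'^2+2 ∧ ∀ j, j ≠ i → lr j = 2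
    · -- reduced instance is exceptional
      obtain ⟨i, hi1, hi2⟩ := hexc'
      rcases eq_or_ne i i₀ with rfl | hii
      · -- then the original is exceptional
        exfalso
        apply hexc
        refine ⟨i, ?_, fun j hj => by rw [← hlrj j hj]; exact hi2 j hj⟩
        rw [hlri₀] at hi1
        have g1 : (m'+1)^2 = m'*m'+2*m'+1 := by ring
        have g3 : m'^2 = m'*m' := by ring
        rw [g3] at hi1
        rw [g1]
        generalize m'*m' = A at hi1 ⊢
        generalize (n'+1)^2 = B at hi1 ⊢
        omega
      · -- the special family
        have hli₀ : l i₀ = 2*m'+3 := by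
          have h2 := hi2 i₀ (Ne.symm hii)
          rw [hlri₀] at h2
          omega
        have hli : l i + (n'+1)^2 = m'^2 + 2 := by rw [← hlrj i hii]; exact hi1
        have h2s : ∀ j, j ≠ i → j ≠ i₀ → l j = 2 := fun j hji hji0 => by
          rw [← hlrj j hji0]; exact hi2 j hji
        have hn'1 : 1 ≤ n' := by
          by_contra hcon
          apply hii
          apply Fin.ext
          have := i.isLt
          have := i₀.isLt
          omega
        have hmn2 : n'+2 ≤ m' := by
          by_contra hcon
          have hmeq : m' = n'+1 := by omega
          subst hmeq
          apply hexc
          refine ⟨i₀, by rw [hli₀]; ring, fun j hj => ?_⟩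
          rcases eq_or_ne j i with rfl | hji
          · generalize (n'+1)^2 = X at hli
            omega
          · exact h2s j hji hj
        obtain ⟨m'', rfl⟩ : ∃ k, m' = k+2 := ⟨m'-2, by omega⟩
        -- the explicit allocation for the family
        classical
        set T : Finset (Fin (n'+1)) := (Finset.univ.erase i).erase i₀ with hT
        have hmemT : ∀ j, j ≠ i₀ → j ≠ i → j ∈ T := fun j h0 h1 => by
          rw [hT]
          simp only [Finset.mem_erase, Finset.mem_univ, and_true]
          exact ⟨h0, h1⟩
        have hcardT : T.card = n'-1 := by
          rw [hT, Finset.card_erase_of_mem, Finset.card_erase_of_mem (Finset.mem_univ i)]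
          · simp
          · exact Finset.mem_erase.2 ⟨Ne.symm hii, Finset.mem_univ i₀⟩
        have keybd : ∀ (j : Fin (n'+1)) (hj : j ∈ T),
            1 ≤ ((T.equivFin ⟨j, hj⟩ : Fin T.card) : ℕ) + 1 ∧
            ((T.equivFin ⟨j, hj⟩ : Fin T.card) : ℕ) + 1 ≤ n' - 1 := by
          intro j hj
          have h1 := (T.equivFin ⟨j, hj⟩).isLt
          have h2 := hcardT
          omega
        refine ⟨fun j => if j = i₀ then ({0, n', m''+1} : Finset ℕ)
          else if j = i then insert (m''+2) (Finset.Ico (n'+1) (m''+1))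
          else if hj : j ∈ T then {((T.equivFin ⟨j, hj⟩ : Fin T.card) : ℕ) + 1}
          else ∅, ?_, ?_, ?_⟩
        · intro j r hr
          dsimp only at hr
          by_cases h0 : j = i₀
          · rw [if_pos h0] at hr
            simp only [Finset.mem_insert, Finset.mem_singleton] at hr
            omega
          by_cases h1 : j = i
          · rw [if_neg h0, if_pos h1] at hr
            simp only [Finset.mem_insert, Finset.mem_Ico] at hr
            omega
          · rw [if_neg h0, if_neg h1, dif_pos (hmemT j h0 h1)] at hr
            simp only [Finset.mem_singleton] at hr
            have := (keybd j (hmemT j h0 h1)).2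
            omega
        · intro a b hab
          dsimp only
          rw [Finset.disjoint_left]
          intro r hra hrb
          by_cases ha0 : a = i₀
          · rw [if_pos ha0] at hra
            simp only [Finset.mem_insert, Finset.mem_singleton] at hra
            by_cases hb0 : b = i₀
            · exact hab (by rw [ha0, hb0])
            by_cases hb1 : b = i
            · rw [if_neg hb0, if_pos hb1] at hrb
              simp only [Finset.mem_insert, Finset.mem_Ico] at hrb
              omega
            · rw [if_neg hb0, if_neg hb1, dif_pos (hmemT b hb0 hb1)] at hrb
              simp only [Finset.mem_singleton] at hrb
              have := keybd b (hmemT b hb0 hb1)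
              omega
          by_cases ha1 : a = i
          · rw [if_neg ha0, if_pos ha1] at hra
            simp only [Finset.mem_insert, Finset.mem_Ico] at hra
            by_cases hb0 : b = i₀
            · rw [if_pos hb0] at hrb
              simp only [Finset.mem_insert, Finset.mem_singleton] at hrb
              omega
            by_cases hb1 : b = i
            · exact hab (by rw [ha1, hb1])
            · rw [if_neg hb0, if_neg hb1, dif_pos (hmemT b hb0 hb1)] at hrb
              simp only [Finset.mem_singleton] at hrb
              have := keybd b (hmemT b hb0 hb1)
              omega
          · rw [if_neg ha0, if_neg ha1, dif_pos (hmemT a ha0 ha1)] at hra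
            simp only [Finset.mem_singleton] at hra
            have hka := keybd a (hmemT a ha0 ha1)
            by_cases hb0 : b = i₀
            · rw [if_pos hb0] at hrb
              simp only [Finset.mem_insert, Finset.mem_singleton] at hrb
              omega
            by_cases hb1 : b = i
            · rw [if_neg hb0, if_pos hb1] at hrb
              simp only [Finset.mem_insert, Finset.mem_Ico] at hrb
              omega
            · rw [if_neg hb0, if_neg hb1, dif_pos (hmemT b hb0 hb1)] at hrb
              simp only [Finset.mem_singleton] at hrb
              apply hab
              have heq : (T.equivFin ⟨a, hmemT a ha0 ha1⟩ : Fin T.card)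
                  = T.equivFin ⟨b, hmemT b hb0 hb1⟩ := by
                apply Fin.ext
                omega
              have := T.equivFin.injective heq
              exact congrArg Subtype.val this
        · intro j
          dsimp only
          by_cases h0 : j = i₀
          · subst h0
            rw [if_pos rfl]
            rw [Finset.sum_insert (by simp only [Finset.mem_insert, Finset.mem_singleton]; omega),
              Finset.sum_insert (by simp only [Finset.mem_singleton]; omega),
              Finset.sum_singleton]
            omega
          by_cases h1 : j = i
          · subst h1
            rw [if_neg h0, if_pos rfl]
            rw [Finset.sum_insert (by simp only [Finset.mem_Ico]; omega)]
            rw [capIco (n'+1) (m''+1) (by omega)]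
            have q1 : (m''+2)^2 = (m''+1)^2 + 2*m''+3 := by ring
            have q2 : (n'+1)^2 ≤ (m''+1)^2 := Nat.pow_le_pow_left (by omega) 2
            rw [q1] at hli
            generalize (m''+1)^2 = A at hli q2 ⊢
            generalize (n'+1)^2 = B at hli q2 ⊢
            omega
          · rw [if_neg h0, if_neg h1, dif_pos (hmemT j h0 h1), Finset.sum_singleton,
              h2s j h1 h0]
            omega
    · -- recurse on the reduced instance
      have key : AllocS m' (n'+1) lr := by
        apply IH m' (by omega) _ _ (by omega) hmn ?_ ?_ hexc'
        · intro j
          rcases eq_or_ne j i₀ with rfl | h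
          · rw [hlri₀]; omega
          · rw [hlrj j h]; exact hl j
        · have hsum_lr : ∑ j, lr j + (2*m'+1) = ∑ j, l j := by
            rw [Fin.sum_univ_succAbove lr i₀, Fin.sum_univ_succAbove l i₀, hlri₀]
            rw [Finset.sum_congr rfl (fun k _ => hlrj (i₀.succAbove k) (Fin.succAbove_ne i₀ k))]
            omega
          have g1 : (m'+1)^2 = m'*m'+2*m'+1 := by ring
          have g2 : (n'+1-1)^2 = n'*n' := by rw [show n'+1-1 = n' from rfl]; ring
          have g3 : m'^2 = m'*m' := by ring
          rw [g2, g1] at hsum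
          rw [g2, g3]
          generalize m'*m' = A at hsum ⊢
          omega
      obtain ⟨S', hb', hdisj', hs'⟩ := key
      refine ⟨Function.update S' i₀ (insert m' (S' i₀)), ?_, ?_, ?_⟩
      · intro j r hr
        rcases eq_or_ne j i₀ with rfl | h
        · rw [Function.update_self] at hr
          rcases Finset.mem_insert.1 hr with rfl | hr
          · omega
          · have := hb' j r hr; omega
        · rw [Function.update_of_ne h] at hr
          have := hb' j r hr; omega
      · intro a b hab
        have hnotm : ∀ j, m' ∉ S' j := fun j h => lt_irrefl _ (hb' j m' h)
        rcases eq_or_ne a i₀ with rfl | ha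
        · rw [Function.update_self, Function.update_of_ne (Ne.symm hab)]
          rw [Finset.disjoint_insert_left]
          exact ⟨hnotm b, hdisj' a b hab⟩
        · rw [Function.update_of_ne ha]
          rcases eq_or_ne b i₀ with rfl | hb
          · rw [Function.update_self, Finset.disjoint_insert_right]
            exact ⟨hnotm a, hdisj' a b hab⟩
          · rw [Function.update_of_ne hb]
            exact hdisj' a b hab
      · intro j
        rcases eq_or_ne j i₀ with rfl | h
        · rw [Function.update_self,
            Finset.sum_insert (fun h => lt_irrefl _ (hb' j m' h))]
          have := hs' j
          rw [hlri₀] at this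
          omega
        · rw [Function.update_of_ne h]
          have := hs' j
          rw [hlrj j h] at this
          omega


/-- A path forest with `n` paths (`m ≥ n ≥ 2`) of total order at most
`m² - (n-1)² + 1` is `m`-burnable, unless it is the path forest with path orders
`m² - n² + 2, 2, ..., 2`. -/
theorem stmt12 (m n : ℕ) (hn : 2 ≤ n) (hm : n ≤ m) (l : Fin n → ℕ)
    (hl : ∀ i, 1 ≤ l i)
    (horder : ∑ i, l i ≤ m ^ 2 - (n - 1) ^ 2 + 1)
    (hexc : ¬ ∃ i : Fin n, l i = m ^ 2 - n ^ 2 + 2 ∧ ∀ j, j ≠ i → l j = 2) :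
    IsBurnable (pathForest l) m := by
  apply allocS_isBurnable m n (by omega) l hl
  apply allocS_core m n l (by omega) hm hl
  · have hsq : (n-1)^2 ≤ m^2 := Nat.pow_le_pow_left (by omega) 2
    generalize m^2 = A at horder hsq ⊢
    generalize (n-1)^2 = B at horder hsq ⊢
    omega
  · rintro ⟨i, h1, h2⟩
    apply hexc
    refine ⟨i, ?_, h2⟩
    have hsq : n^2 ≤ m^2 := Nat.pow_le_pow_left hm 2
    generalize m^2 = A at h1 hsq ⊢
    generalize n^2 = B at h1 hsq ⊢
    omega
end

section
/- For all m ≥ n ≥ 2, every path forest with n paths and total order at most m² - (n-1)² is m-burnable, and m² - (n-1)² is the largest integer with this property (i.e., there is a path forest with n paths of order m² - (n-1)² + 1 that is not m-burnable). -/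
lemma sum_odds_range (m : ℕ) : ∑ j ∈ Finset.range m, (2 * j + 1) = m ^ 2 := by
  induction m with
  | zero => simp
  | succ k ih => rw [Finset.sum_range_succ, ih]; ring

lemma sum_odds_lower (a : ℕ) (T : Finset ℕ) (hT : ∀ x ∈ T, a ≤ x) :
    T.card ^ 2 + 2 * a * T.card ≤ ∑ x ∈ T, (2 * x + 1) := by
  induction T using Finset.induction_on_max with
  | empty => simp
  | insert b s hmax ih =>
    have hb : b ∉ s := fun h => lt_irrefl b (hmax b h)
    have hs : ∀ x ∈ s, a ≤ x := fun x hx => hT x (Finset.mem_insert_of_mem hx)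
    have ihs := ih hs
    have hsub : s ⊆ Finset.Ico a b := fun x hx =>
      Finset.mem_Ico.mpr ⟨hs x hx, hmax x hx⟩
    have hcard : s.card ≤ b - a := by
      have := Finset.card_le_card hsub
      simpa [Nat.card_Ico] using this
    have hab : a ≤ b := hT b (Finset.mem_insert_self b s)
    rw [Finset.sum_insert hb, Finset.card_insert_of_notMem hb]
    have h1 : (s.card + 1) ^ 2 + 2 * a * (s.card + 1)
        = (s.card ^ 2 + 2 * a * s.card) + (2 * s.card + 2 * a + 1) := by ring
    rw [h1]
    have h2 : 2 * s.card + 2 * a + 1 ≤ 2 * b + 1 := by omega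
    omega

lemma exists_prefix (w : ℕ → ℕ) (A : Finset ℕ) :
    ∀ x : ℕ, x < ∑ j ∈ A, w j →
    ∃ j ∈ A, (∑ j' ∈ A.filter (· < j), w j') ≤ x ∧
      x < (∑ j' ∈ A.filter (· < j), w j') + w j := by
  induction A using Finset.induction_on_max with
  | empty => simp
  | insert b s hmax ih =>
    intro x hx
    have hb : b ∉ s := fun h => lt_irrefl b (hmax b h)
    rw [Finset.sum_insert hb] at hx
    by_cases hcase : x < ∑ j ∈ s, w j
    · obtain ⟨j, hj, h1, h2⟩ := ih x hcase
      have hfe : (insert b s).filter (· < j) = s.filter (· < j) := by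
        rw [Finset.filter_insert]
        rw [if_neg (by have := hmax j hj; omega)]
      exact ⟨j, Finset.mem_insert_of_mem hj, by rw [hfe]; exact ⟨h1, h2⟩⟩
    · refine ⟨b, Finset.mem_insert_self b s, ?_⟩
      have hfe : (insert b s).filter (· < b) = s := by
        rw [Finset.filter_insert, if_neg (lt_irrefl b)]
        exact Finset.filter_true_of_mem fun x hx => hmax x hx
      rw [hfe]; omega

section PF
variable {n : ℕ} {l : Fin n → ℕ}

lemma pf_walk_fst {x y : Σ i : Fin n, Fin (l i)} (w : (pathForest l).Walk x y) :
    x.1 = y.1 := by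
  induction w with
  | nil => rfl
  | cons h _ ih => exact h.1.trans ih

lemma pf_walk_dist {x y : Σ i : Fin n, Fin (l i)} (w : (pathForest l).Walk x y) :
    Nat.dist x.2.val y.2.val ≤ w.length := by
  induction w with
  | nil => simp [Nat.dist_self]
  | cons h w ih =>
    rename_i u v p
    calc Nat.dist u.2.val p.2.val ≤ Nat.dist u.2.val v.2.val + Nat.dist v.2.val p.2.val :=
          Nat.dist.triangle_inequality _ _ _
    _ ≤ 1 + w.length := by have := h.2; omega
    _ = _ := by simp [SimpleGraph.Walk.length_cons]; omega

lemma pf_edist_le_aux (i : Fin n) (k : ℕ) :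
    ∀ a b : Fin (l i), b.val = a.val + k →
      (pathForest l).edist ⟨i, a⟩ ⟨i, b⟩ ≤ (k : ℕ∞) := by
  induction k with
  | zero =>
    intro a b hb
    have : a = b := Fin.ext (by omega)
    subst this
    simp [SimpleGraph.edist_self]
  | succ k ih =>
    intro a b hb
    have hb' : a.val + k < l i := by have := b.isLt; omega
    set b' : Fin (l i) := ⟨a.val + k, hb'⟩ with hb'def
    have h1 : (pathForest l).edist ⟨i, a⟩ ⟨i, b'⟩ ≤ (k : ℕ∞) := ih a b' rfl
    have hadj : (pathForest l).Adj ⟨i, b'⟩ ⟨i, b⟩ := by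
      refine ⟨rfl, ?_⟩
      simp only [Nat.dist]
      have hb'v : ((⟨a.val + k, hb'⟩ : Fin (l i)) : ℕ) = a.val + k := rfl
      omega
    have h2 : (pathForest l).edist ⟨i, b'⟩ ⟨i, b⟩ ≤ 1 :=
      le_of_eq (SimpleGraph.edist_eq_one_iff_adj.mpr hadj) |>.trans le_rfl
    calc (pathForest l).edist ⟨i, a⟩ ⟨i, b⟩
        ≤ (pathForest l).edist ⟨i, a⟩ ⟨i, b'⟩ + (pathForest l).edist ⟨i, b'⟩ ⟨i, b⟩ :=
          SimpleGraph.edist_triangle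
      _ ≤ (k : ℕ∞) + 1 := add_le_add h1 h2
      _ = ((k + 1 : ℕ) : ℕ∞) := by push_cast; ring

lemma pf_edist_le (i : Fin n) (a b : Fin (l i)) :
    (pathForest l).edist ⟨i, a⟩ ⟨i, b⟩ ≤ (Nat.dist a.val b.val : ℕ∞) := by
  rcases le_total a.val b.val with h | h
  · have : Nat.dist a.val b.val = b.val - a.val := by simp [Nat.dist]; omega
    rw [this]
    exact pf_edist_le_aux i _ a b (by omega)
  · have : Nat.dist a.val b.val = a.val - b.val := by simp [Nat.dist]; omega
    rw [this, SimpleGraph.edist_comm]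
    exact pf_edist_le_aux i _ b a (by omega)

lemma interval_card (L c r : ℕ) :
    (Finset.univ.filter (fun x : Fin L => Nat.dist c x.val ≤ r)).card ≤ 2 * r + 1 := by
  classical
  have : (Finset.univ.filter (fun x : Fin L => Nat.dist c x.val ≤ r)).card
      ≤ (Finset.range (2 * r + 1)).card := by
    apply Finset.card_le_card_of_injOn (fun x => x.val + r - c)
    · intro x hx
      simp only [SetLike.mem_coe, Finset.mem_filter, Finset.mem_univ, true_and] at hx
      simp only [Nat.dist] at hx
      simp only [SetLike.mem_coe, Finset.mem_range]
      omega
    · intro x hx y hy hxy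
      simp only [SetLike.mem_coe, Finset.mem_filter, Finset.mem_univ, true_and] at hx hy
      simp only [Nat.dist] at hx hy
      dsimp only at hxy
      apply Fin.ext
      omega
  simpa using this

end PF

lemma sum_filter_castSucc_le {m a b : ℕ} (g : Fin (m + 1) → Fin a) (g' : Fin m → Fin b)
    (i : Fin a) (k : Fin b) (h : ∀ j : Fin m, g' j = k → g j.castSucc = i) :
    ∑ j ∈ Finset.univ.filter (fun j => g' j = k), (2 * j.val + 1) ≤
      ∑ j ∈ Finset.univ.filter (fun j => g j = i), (2 * j.val + 1) := by
  classical
  rw [Finset.sum_filter, Finset.sum_filter, Fin.sum_univ_castSucc]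
  have hpt : ∀ j : Fin m, (if g' j = k then 2 * j.val + 1 else 0)
      ≤ (if g j.castSucc = i then 2 * (j.castSucc).val + 1 else 0) := by
    intro j
    by_cases hj : g' j = k
    · rw [if_pos hj, if_pos (h j hj)]
      simp
    · simp [hj]
  calc ∑ j : Fin m, (if g' j = k then 2 * j.val + 1 else 0)
      ≤ ∑ j : Fin m, (if g j.castSucc = i then 2 * (j.castSucc).val + 1 else 0) :=
        Finset.sum_le_sum fun j _ => hpt j
    _ ≤ _ := Nat.le_add_right _ _

lemma sum_filter_castSucc_le' {m a b : ℕ} (g : Fin (m + 1) → Fin a) (g' : Fin m → Fin b)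
    (i : Fin a) (k : Fin b) (h : ∀ j : Fin m, g' j = k → g j.castSucc = i)
    (hlast : g (Fin.last m) = i) :
    (∑ j ∈ Finset.univ.filter (fun j => g' j = k), (2 * j.val + 1)) + (2 * m + 1) ≤
      ∑ j ∈ Finset.univ.filter (fun j => g j = i), (2 * j.val + 1) := by
  classical
  rw [Finset.sum_filter, Finset.sum_filter, Fin.sum_univ_castSucc]
  have hpt : ∀ j : Fin m, (if g' j = k then 2 * j.val + 1 else 0)
      ≤ (if g j.castSucc = i then 2 * (j.castSucc).val + 1 else 0) := by
    intro j
    by_cases hj : g' j = k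
    · rw [if_pos hj, if_pos (h j hj)]
      simp
    · simp [hj]
  have h1 : ∑ j : Fin m, (if g' j = k then 2 * j.val + 1 else 0)
      ≤ ∑ j : Fin m, (if g j.castSucc = i then 2 * (j.castSucc).val + 1 else 0) :=
    Finset.sum_le_sum fun j _ => hpt j
  rw [if_pos hlast]
  simp only [Fin.val_last]
  omega

lemma key (m : ℕ) : ∀ n : ℕ, ∀ l : Fin (n + 1) → ℕ, n + 1 ≤ m → (∀ i, 1 ≤ l i) →
    (∑ i, l i) + n ^ 2 ≤ m ^ 2 →
    ∃ g : Fin m → Fin (n + 1),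
      ∀ i, l i ≤ ∑ j ∈ Finset.univ.filter (fun j => g j = i), (2 * j.val + 1) := by
  induction m using Nat.strong_induction_on with
  | _ m IH =>
  intro n l hnm hl hsum
  match n, l, hnm, hl, hsum with
  | 0, l, hnm, hl, hsum =>
    refine ⟨fun _ => 0, fun i => ?_⟩
    have hi : i = 0 := Fin.ext (by have := i.isLt; omega)
    subst hi
    have hfull : Finset.univ.filter (fun j : Fin m => (fun _ => (0 : Fin 1)) j = 0)
        = Finset.univ := by
      apply Finset.filter_true_of_mem
      intro j _
      rfl
    rw [hfull]
    have hms : ∑ j : Fin m, (2 * j.val + 1) = m ^ 2 := by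
      rw [Fin.sum_univ_eq_sum_range (fun j => 2 * j + 1) m]
      exact sum_odds_range m
    have hls : ∑ i, l i = l 0 := by simp
    rw [hls] at hsum
    omega
  | n' + 1, l, hnm, hl, hsum =>
  -- now there are n'+2 paths
  obtain ⟨m', rfl⟩ : ∃ m'', m = m'' + 1 := ⟨m - 1, by omega⟩
  by_cases hsmall : ∀ i, l i ≤ 2 * (m' + 1 - (n' + 2)) + 1
  · -- assign top n'+2 balls, one per path
    set d := m' + 1 - (n' + 2) with hd
    refine ⟨fun j => if h : d ≤ j.val then ⟨j.val - d, by omega⟩ else ⟨0, by omega⟩,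
      fun i => ?_⟩
    have hji : d + i.val < m' + 1 := by have := i.isLt; omega
    set ji : Fin (m' + 1) := ⟨d + i.val, hji⟩ with hjidef
    have hgji : (if h : d ≤ ji.val then (⟨ji.val - d, by omega⟩ : Fin (n' + 2))
        else ⟨0, by omega⟩) = i := by
      rw [dif_pos (by simp [hjidef])]
      apply Fin.ext
      simp [hjidef]
    have hmem : ji ∈ Finset.univ.filter
        (fun j : Fin (m' + 1) => (if h : d ≤ j.val then (⟨j.val - d, by omega⟩ : Fin (n' + 2))
          else ⟨0, by omega⟩) = i) :=
      Finset.mem_filter.mpr ⟨Finset.mem_univ _, hgji⟩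
    calc l i ≤ 2 * d + 1 := hsmall i
      _ ≤ 2 * ji.val + 1 := by have : ji.val = d + i.val := rfl; omega
      _ ≤ _ := Finset.single_le_sum (f := fun j : Fin (m' + 1) => 2 * j.val + 1)
          (fun _ _ => Nat.zero_le _) hmem
  · push_neg at hsmall
    obtain ⟨i₀, _, hmax⟩ := Finset.exists_max_image Finset.univ l ⟨0, Finset.mem_univ 0⟩
    have hbig : 2 * (m' + 1 - (n' + 2)) + 2 ≤ l i₀ := by
      obtain ⟨i1, h1⟩ := hsmall
      have := hmax i1 (Finset.mem_univ i1)
      omega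
    have hli₀sum : l i₀ ≤ ∑ i, l i :=
      Finset.single_le_sum (fun _ _ => Nat.zero_le _) (Finset.mem_univ i₀)
    obtain ⟨e, he⟩ : ∃ e, m' = n' + 1 + e := ⟨m' - n' - 1, by omega⟩
    subst he
    have hdsimp : n' + 1 + e + 1 - (n' + 2) = e := by omega
    rw [hdsimp] at hbig
    by_cases hcase : l i₀ ≤ 2 * (n' + 1 + e) + 1
    · -- single top ball covers path i₀; recurse with one fewer path
      set l' : Fin (n' + 1) → ℕ := fun k => l (i₀.succAbove k) with hl'def
      have hsplit : ∑ i, l i = l i₀ + ∑ k, l' k := Fin.sum_univ_succAbove l i₀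
      have hsum' : (∑ k, l' k) + n' ^ 2 ≤ (n' + 1 + e) ^ 2 := by
        rw [hsplit] at hsum
        nlinarith [hsum, hbig]
      obtain ⟨g', hg'⟩ := IH (n' + 1 + e) (by omega) n' l' (by omega)
        (fun k => hl _) hsum'
      refine ⟨fun j => if h : j.val < n' + 1 + e then i₀.succAbove (g' ⟨j.val, h⟩) else i₀,
        fun i => ?_⟩
      by_cases hi : i = i₀
      · rw [hi]
        set jtop : Fin (n' + 1 + e + 1) := Fin.last _ with hjt
        have hgt : (if h : jtop.val < n' + 1 + e then i₀.succAbove (g' ⟨jtop.val, h⟩) else i₀)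
            = i₀ := by
          rw [dif_neg (by simp [hjt])]
        have hmem : jtop ∈ Finset.univ.filter
            (fun j : Fin (n' + 1 + e + 1) =>
              (if h : j.val < n' + 1 + e then i₀.succAbove (g' ⟨j.val, h⟩) else i₀) = i₀) :=
          Finset.mem_filter.mpr ⟨Finset.mem_univ _, hgt⟩
        calc l i₀ ≤ 2 * jtop.val + 1 := by simp [hjt]; omega
          _ ≤ _ := Finset.single_le_sum (f := fun j : Fin (n' + 1 + e + 1) => 2 * j.val + 1)
              (fun _ _ => Nat.zero_le _) hmem
      · obtain ⟨k, hk⟩ := Fin.exists_succAbove_eq hi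
        have hlk : l i = l' k := by simp only [hl'def]; rw [hk]
        rw [hlk]
        refine (hg' k).trans ?_
        apply sum_filter_castSucc_le
        intro j hj
        show (if h : j.val < n' + 1 + e then i₀.succAbove (g' ⟨j.val, h⟩) else i₀) = i
        rw [dif_pos j.isLt]
        show i₀.succAbove (g' j) = i
        rw [hj]
        exact hk
    · -- big path needs more than one ball: give it the top ball and recurse
      have hm2 : n' + 2 ≤ n' + 1 + e := by
        rcases Nat.eq_zero_or_pos e with he0 | hpos
        · exfalso
          subst he0
          have e1 : (n' + 1 + 0 + 1) ^ 2 = (n' + 1) ^ 2 + (2 * n' + 3) := by ring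
          rw [e1] at hsum
          omega
        · omega
      set M := n' + 1 + e with hM
      set l' : Fin (n' + 2) → ℕ := Function.update l i₀ (l i₀ - (2 * M + 1)) with hl'def
      have hl' : ∀ i, 1 ≤ l' i := by
        intro i
        rcases eq_or_ne i i₀ with rfl | hne
        · rw [hl'def, Function.update_self]; omega
        · rw [hl'def, Function.update_of_ne hne]; exact hl i
      have hsum'' : (∑ i, l' i) + (2 * M + 1) = ∑ i, l i := by
        rw [hl'def, Finset.sum_update_of_mem (Finset.mem_univ i₀),
          ← Finset.add_sum_erase _ l (Finset.mem_univ i₀), Finset.erase_eq]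
        omega
      have hsum' : (∑ i, l' i) + (n' + 1) ^ 2 ≤ M ^ 2 := by
        have e1 : (M + 1) ^ 2 = M ^ 2 + (2 * M + 1) := by ring
        rw [e1] at hsum
        omega
      obtain ⟨g', hg'⟩ := IH M (by omega) (n' + 1) l' hm2 hl' hsum'
      refine ⟨fun j => if h : j.val < M then g' ⟨j.val, h⟩ else i₀, fun i => ?_⟩
      by_cases hi : i = i₀
      · rw [hi]
        have step := sum_filter_castSucc_le'
          (g := fun j : Fin (M + 1) => if h : j.val < M then g' ⟨j.val, h⟩ else i₀)
          (g' := g') i₀ i₀ ?_ ?_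
        · calc l i₀ ≤ (l i₀ - (2 * M + 1)) + (2 * M + 1) := by omega
            _ = l' i₀ + (2 * M + 1) := by rw [hl'def, Function.update_self]
            _ ≤ (∑ j ∈ Finset.univ.filter (fun j => g' j = i₀), (2 * j.val + 1))
                + (2 * M + 1) := by
                  have := hg' i₀
                  omega
            _ ≤ _ := step
        · intro j hj
          show (if h : j.val < M then g' ⟨j.val, h⟩ else i₀) = i₀
          rw [dif_pos j.isLt]
          exact hj
        · show (if h : (Fin.last M).val < M then g' ⟨(Fin.last M).val, h⟩ else i₀) = i₀
          rw [dif_neg (by simp)]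
      · have hli : l i = l' i := by rw [hl'def, Function.update_of_ne hi]
        rw [hli]
        refine (hg' i).trans ?_
        apply sum_filter_castSucc_le
        intro j hj
        show (if h : j.val < M then g' ⟨j.val, h⟩ else i₀) = i
        rw [dif_pos j.isLt]
        exact hj

lemma center_dist (P x L r : ℕ) (hx : x < L) (h1 : P ≤ x) (h2 : x < P + (2 * r + 1))
    (hL : 1 ≤ L) : Nat.dist (min (P + r) (L - 1)) x ≤ r := by
  simp only [Nat.dist]
  omega

lemma burnable_of_assign {n m : ℕ} (l : Fin n → ℕ) (hl : ∀ i, 1 ≤ l i)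
    (g : Fin m → Fin n)
    (hg : ∀ i, l i ≤ ∑ j ∈ Finset.univ.filter (fun j => g j = i), (2 * j.val + 1)) :
    IsBurnable (pathForest l) m := by
  classical
  set A : Fin n → Finset ℕ :=
    fun i => (Finset.univ.filter (fun j => g j = i)).image Fin.val with hA
  have hAsum : ∀ i, ∑ a ∈ A i, (2 * a + 1)
      = ∑ j ∈ Finset.univ.filter (fun j => g j = i), (2 * j.val + 1) := by
    intro i
    rw [hA]
    rw [Finset.sum_image]
    intro x _ y _ h
    exact Fin.ext h
  refine ⟨fun j => ⟨g j,
    ⟨min ((∑ a ∈ (A (g j)).filter (· < j.val), (2 * a + 1)) + j.val) (l (g j) - 1),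
      by have := hl (g j); omega⟩⟩, ?_⟩
  rintro ⟨i, x⟩
  have hxlt : (x : ℕ) < ∑ a ∈ A i, (2 * a + 1) := by
    rw [hAsum i]
    have := hg i
    have := x.isLt
    omega
  obtain ⟨a, ha, h1, h2⟩ := exists_prefix (fun a => 2 * a + 1) (A i) x hxlt
  rw [hA] at ha
  obtain ⟨j, hjmem, rfl⟩ := Finset.mem_image.mp ha
  have hgj : g j = i := (Finset.mem_filter.mp hjmem).2
  subst hgj
  refine ⟨j, ?_⟩
  have hdist := center_dist (∑ a ∈ (A (g j)).filter (· < j.val), (2 * a + 1))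
    x.val (l (g j)) j.val x.isLt h1 h2 (hl _)
  exact le_trans (pf_edist_le (g j) _ x) (by exact_mod_cast hdist)

lemma assign_of_burnable {n m : ℕ} (l : Fin n → ℕ) (hb : IsBurnable (pathForest l) m) :
    ∃ g : Fin m → Fin n,
      ∀ i, l i ≤ ∑ j ∈ Finset.univ.filter (fun j => g j = i), (2 * j.val + 1) := by
  classical
  obtain ⟨f, hf⟩ := hb
  refine ⟨fun j => (f j).1, fun i => ?_⟩
  show l i ≤ ∑ j ∈ Finset.univ.filter (fun j : Fin m => (f j).1 = i), (2 * j.val + 1)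
  have hcov : ∀ x : Fin (l i), ∃ j : Fin m,
      (f j).1 = i ∧ Nat.dist (f j).2.val x.val ≤ j.val := by
    intro x
    obtain ⟨j, hj⟩ := hf ⟨i, x⟩
    have hne : (pathForest l).edist (f j) ⟨i, x⟩ ≠ ⊤ := by
      intro h
      rw [h] at hj
      simp at hj
    obtain ⟨p, hp⟩ := SimpleGraph.exists_walk_of_edist_ne_top hne
    refine ⟨j, pf_walk_fst p, ?_⟩
    have hlen : (p.length : ℕ∞) ≤ (j.val : ℕ∞) := by rw [hp]; exact hj
    have hlen' : p.length ≤ j.val := by exact_mod_cast hlen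
    exact le_trans (pf_walk_dist p) hlen'
  have hsub : (Finset.univ : Finset (Fin (l i))) ⊆
      (Finset.univ.filter (fun j : Fin m => (f j).1 = i)).biUnion
        (fun j => Finset.univ.filter
          (fun x : Fin (l i) => Nat.dist (f j).2.val x.val ≤ j.val)) := by
    intro x _
    obtain ⟨j, hj1, hj2⟩ := hcov x
    exact Finset.mem_biUnion.mpr ⟨j, Finset.mem_filter.mpr ⟨Finset.mem_univ _, hj1⟩,
      Finset.mem_filter.mpr ⟨Finset.mem_univ _, hj2⟩⟩
  calc l i = (Finset.univ : Finset (Fin (l i))).card := by simp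
    _ ≤ _ := Finset.card_le_card hsub
    _ ≤ ∑ j ∈ Finset.univ.filter (fun j : Fin m => (f j).1 = i),
        (Finset.univ.filter
          (fun x : Fin (l i) => Nat.dist (f j).2.val x.val ≤ j.val)).card :=
      Finset.card_biUnion_le
    _ ≤ ∑ j ∈ Finset.univ.filter (fun j : Fin m => (f j).1 = i), (2 * j.val + 1) :=
      Finset.sum_le_sum fun j _ => interval_card _ _ _

/-- For `m ≥ n ≥ 2`, every path forest with `n` paths of total order at most
`m² - (n-1)²` is `m`-burnable, and this bound is tight: some path forest with
`n` paths of total order `m² - (n-1)² + 1` is not `m`-burnable. -/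
theorem stmt14 (m n : ℕ) (hn : 2 ≤ n) (hm : n ≤ m) :
    (∀ l : Fin n → ℕ, (∀ i, 1 ≤ l i) → ∑ i, l i ≤ m ^ 2 - (n - 1) ^ 2 →
      IsBurnable (pathForest l) m) ∧
    ∃ l : Fin n → ℕ, (∀ i, 1 ≤ l i) ∧ ∑ i, l i = m ^ 2 - (n - 1) ^ 2 + 1 ∧
      ¬ IsBurnable (pathForest l) m := by
  obtain ⟨n'', rfl⟩ : ∃ k, n = k + 2 := ⟨n - 2, by omega⟩
  have hn1 : n'' + 2 - 1 = n'' + 1 := by omega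
  have hsq1 : (n'' + 1) ^ 2 ≤ m ^ 2 := Nat.pow_le_pow_left (by omega) 2
  have hsq2 : (n'' + 2) ^ 2 ≤ m ^ 2 := Nat.pow_le_pow_left (by omega) 2
  have ering : (n'' + 2) ^ 2 = (n'' + 1) ^ 2 + (2 * n'' + 3) := by ring
  constructor
  · intro l hl hsum
    rw [hn1] at hsum
    have hsum' : (∑ i, l i) + (n'' + 1) ^ 2 ≤ m ^ 2 := by omega
    obtain ⟨g, hg⟩ := key m (n'' + 1) l hm hl hsum'
    exact burnable_of_assign l hl g hg
  · refine ⟨fun i => if i = Fin.last (n'' + 1) then m ^ 2 - (n'' + 2) ^ 2 + 2 else 2,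
      fun i => ?_, ?_, ?_⟩
    · dsimp only
      split <;> omega
    · rw [hn1, Fin.sum_univ_castSucc]
      have h1 : ∀ j : Fin (n'' + 1),
          (if (Fin.castSucc j : Fin (n'' + 2)) = Fin.last (n'' + 1) then
            m ^ 2 - (n'' + 2) ^ 2 + 2 else 2) = 2 := by
        intro j
        rw [if_neg (Fin.castSucc_lt_last j).ne]
      rw [Finset.sum_congr rfl (fun j _ => h1 j), if_pos rfl, Finset.sum_const]
      simp only [Finset.card_univ, Fintype.card_fin, smul_eq_mul]
      omega
    · intro hb
      obtain ⟨g, hg⟩ := assign_of_burnable _ hb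
      set L : Fin (n'' + 2) := Fin.last (n'' + 1) with hL
      have hbigsum : m ^ 2 - (n'' + 2) ^ 2 + 2
          ≤ ∑ j ∈ Finset.univ.filter (fun j => g j = L), (2 * j.val + 1) := by
        have := hg L
        rwa [if_pos rfl] at this
      have hsmall : ∀ i, ¬ i = L →
          2 ≤ ∑ j ∈ Finset.univ.filter (fun j => g j = i), (2 * j.val + 1) := by
        intro i hi
        have := hg i
        rwa [if_neg hi] at this
      set T : Finset (Fin m) := Finset.univ.filter (fun j => ¬ g j = L) with hT
      have hsplit : (∑ j ∈ Finset.univ.filter (fun j => g j = L), (2 * j.val + 1))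
          + (∑ j ∈ T, (2 * j.val + 1)) = m ^ 2 := by
        rw [hT, Finset.sum_filter_add_sum_filter_not]
        rw [Fin.sum_univ_eq_sum_range (fun j => 2 * j + 1) m]
        exact sum_odds_range m
      -- every small path has a nonempty ball set
      have hSne : ∀ k : Fin (n'' + 1),
          (Finset.univ.filter (fun j => g j = Fin.castSucc k)).Nonempty := by
        intro k
        apply Finset.nonempty_of_sum_ne_zero (f := fun j : Fin m => 2 * j.val + 1)
        have := hsmall (Fin.castSucc k) (Fin.castSucc_lt_last k).ne
        omega
      have hTcard : n'' + 1 ≤ T.card := by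
        have := Finset.card_le_card_of_injOn (fun k : Fin (n'' + 1) => (hSne k).choose)
          (s := Finset.univ) (t := T) ?_ ?_
        · simpa using this
        · intro k _
          have hk := (hSne k).choose_spec
          rw [Finset.mem_filter] at hk
          rw [hT, SetLike.mem_coe, Finset.mem_filter]
          exact ⟨Finset.mem_univ _, by rw [hk.2]; exact (Fin.castSucc_lt_last k).ne⟩
        · intro k _ k' _ heq
          have hk := (hSne k).choose_spec
          have hk' := (hSne k').choose_spec
          rw [Finset.mem_filter] at hk hk'
          have : Fin.castSucc k = Fin.castSucc k' := by
            rw [← hk.2, ← hk'.2]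
            exact congrArg g heq
          exact Fin.castSucc_injective _ this
      have hclaim : (n'' + 1) ^ 2 + 2 * (n'' + 1) ≤ ∑ j ∈ T, (2 * j.val + 1) := by
        have hsum_im : ∑ x ∈ T.image Fin.val, (2 * x + 1) = ∑ j ∈ T, (2 * j.val + 1) :=
          Finset.sum_image (fun x _ y _ h => Fin.ext h)
        have hcard_im : (T.image Fin.val).card = T.card :=
          Finset.card_image_of_injective _ Fin.val_injective
        by_cases hk : n'' + 2 ≤ T.card
        · have h0 := sum_odds_lower 0 (T.image Fin.val) (fun x _ => Nat.zero_le x)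
          rw [hsum_im, hcard_im] at h0
          have hpow : (n'' + 2) ^ 2 ≤ T.card ^ 2 := Nat.pow_le_pow_left hk 2
          omega
        · have hkeq : T.card = n'' + 1 := by omega
          -- fibers over small paths
          have hfib : T.card = ∑ i ∈ Finset.univ.filter (fun i : Fin (n'' + 2) => ¬ i = L),
              (T.filter (fun j => g j = i)).card := by
            apply Finset.card_eq_sum_card_fiberwise (f := g)
            intro j hj
            rw [hT, SetLike.mem_coe, Finset.mem_filter] at hj
            exact Finset.mem_filter.mpr ⟨Finset.mem_univ _, hj.2⟩
          have hfibeq : ∀ i : Fin (n'' + 2), ¬ i = L →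
              T.filter (fun j => g j = i) = Finset.univ.filter (fun j => g j = i) := by
            intro i hi
            ext j
            rw [hT]
            simp only [Finset.mem_filter, Finset.filter_filter, Finset.mem_univ, true_and]
            constructor
            · rintro ⟨_, h2⟩; exact h2
            · intro h2; exact ⟨by rw [h2]; exact hi, h2⟩
          have hfib1 : ∀ i ∈ Finset.univ.filter (fun i : Fin (n'' + 2) => ¬ i = L),
              1 ≤ (T.filter (fun j => g j = i)).card := by
            intro i hi
            rw [Finset.mem_filter] at hi
            rw [hfibeq i hi.2]
            obtain ⟨k, hk⟩ := Fin.exists_castSucc_eq.mpr (by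
              rw [hL] at hi
              exact hi.2)
            rw [← hk]
            exact Finset.card_pos.mpr (hSne k)
          have hfibcard : (Finset.univ.filter (fun i : Fin (n'' + 2) => ¬ i = L)).card
              = n'' + 1 := by
            have heq2 : Finset.univ.filter (fun i : Fin (n'' + 2) => ¬ i = L)
                = Finset.univ.erase L := by
              ext i
              simp [Finset.mem_erase]
            rw [heq2, Finset.card_erase_of_mem (Finset.mem_univ _), Finset.card_univ,
              Fintype.card_fin]
            omega
          -- each fiber has exactly one element
          have hall1 : ∀ i ∈ Finset.univ.filter (fun i : Fin (n'' + 2) => ¬ i = L),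
              (T.filter (fun j => g j = i)).card = 1 := by
            intro i hi
            by_contra hne1
            have h2 : 2 ≤ (T.filter (fun j => g j = i)).card := by
              have := hfib1 i hi
              omega
            have hrest : ((Finset.univ.filter (fun i : Fin (n'' + 2) => ¬ i = L)).erase i).card
                ≤ ∑ i' ∈ (Finset.univ.filter
                  (fun i : Fin (n'' + 2) => ¬ i = L)).erase i,
                  (T.filter (fun j => g j = i')).card := by
              refine le_trans (le_of_eq ?_) (Finset.sum_le_sum fun i' hi' =>
                hfib1 i' (Finset.mem_of_mem_erase hi'))
              rw [Finset.sum_const, smul_eq_mul, mul_one]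
            have hsplit2 : (T.filter (fun j => g j = i)).card
                + ∑ i' ∈ (Finset.univ.filter (fun i : Fin (n'' + 2) => ¬ i = L)).erase i,
                  (T.filter (fun j => g j = i')).card
                = ∑ i' ∈ Finset.univ.filter (fun i : Fin (n'' + 2) => ¬ i = L),
                  (T.filter (fun j => g j = i')).card :=
              Finset.add_sum_erase _ (fun i' => (T.filter (fun j => g j = i')).card) hi
            rw [Finset.card_erase_of_mem hi, hfibcard] at hrest
            omega
          -- every ball in T has radius ≥ 1
          have hpos : ∀ x ∈ T.image Fin.val, 1 ≤ x := by
            intro x hx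
            obtain ⟨j, hj, rfl⟩ := Finset.mem_image.mp hx
            have hjT := hj
            rw [hT, Finset.mem_filter] at hjT
            have hiL : ¬ g j = L := hjT.2
            have hmem : g j ∈ Finset.univ.filter (fun i : Fin (n'' + 2) => ¬ i = L) :=
              Finset.mem_filter.mpr ⟨Finset.mem_univ _, hiL⟩
            have hcard1 := hall1 (g j) hmem
            obtain ⟨a, ha⟩ := Finset.card_eq_one.mp hcard1
            have hjmem : j ∈ T.filter (fun j' => g j' = g j) :=
              Finset.mem_filter.mpr ⟨hj, rfl⟩
            rw [ha, Finset.mem_singleton] at hjmem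
            subst hjmem
            have hsum1 := hsmall (g j) hiL
            rw [hfibeq (g j) hiL] at ha
            rw [ha, Finset.sum_singleton] at hsum1
            omega
          have h1 := sum_odds_lower 1 (T.image Fin.val) hpos
          rw [hsum_im, hcard_im, hkeq] at h1
          omega
      omega
end

section
/- For all 2 ≤ m ≤ n, every n-spider of order at most m² + n - m is m-burnable, and there exists an n-spider of order m² + n - m + 1 that is not m-burnable (namely the spider with m arms of length m and n - m arms of length 1). -/
set_option maxHeartbeats 1000000

open SimpleGraph

lemma edist_arm_le {n : ℕ} (l : Fin n → ℕ) (i : Fin n) (a b : Fin (l i)) :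
    (spider l).edist (some ⟨i, a⟩) (some ⟨i, b⟩) ≤ (Nat.dist a.val b.val : ℕ∞) := by
  suffices H : ∀ d (x y : Fin (l i)), y.val = x.val + d →
      (spider l).edist (some ⟨i, x⟩) (some ⟨i, y⟩) ≤ (d : ℕ∞) by
    rcases le_total a.val b.val with h | h
    · have := H (b.val - a.val) a b (by omega)
      rwa [show Nat.dist a.val b.val = b.val - a.val from Nat.dist_eq_sub_of_le h]
    · have := H (a.val - b.val) b a (by omega)
      rw [show Nat.dist a.val b.val = a.val - b.val from Nat.dist_eq_sub_of_le_right h,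
        edist_comm]
      exact this
  intro d
  induction d with
  | zero =>
    intro x y hxy
    have : x = y := Fin.ext (by omega)
    subst this; simp
  | succ d ih =>
    intro x y hxy
    have hx' : x.val + d < l i := by omega
    have h1 := ih x ⟨x.val + d, hx'⟩ rfl
    have hadj : (spider l).Adj (some ⟨i, ⟨x.val + d, hx'⟩⟩) (some ⟨i, y⟩) := by
      refine ⟨rfl, ?_⟩
      show Nat.dist (x.val + d) y.val = 1
      rw [Nat.dist_eq_sub_of_le (by omega)]
      omega
    calc (spider l).edist (some ⟨i, x⟩) (some ⟨i, y⟩)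
        ≤ (spider l).edist (some ⟨i, x⟩) (some ⟨i, ⟨x.val + d, hx'⟩⟩)
          + (spider l).edist (some ⟨i, ⟨x.val + d, hx'⟩⟩) (some ⟨i, y⟩) :=
          SimpleGraph.edist_triangle
      _ ≤ (d : ℕ∞) + 1 := add_le_add h1 (edist_eq_one_iff_adj.mpr hadj).le
      _ = ((d + 1 : ℕ) : ℕ∞) := by push_cast; ring

lemma edist_head_le {n : ℕ} (l : Fin n → ℕ) (i : Fin n) (a : Fin (l i)) :
    (spider l).edist none (some ⟨i, a⟩) ≤ ((a.val + 1 : ℕ) : ℕ∞) := by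
  have hpos : 0 < l i := a.pos
  have hadj : (spider l).Adj none (some ⟨i, ⟨0, hpos⟩⟩) := rfl
  calc (spider l).edist none (some ⟨i, a⟩)
      ≤ (spider l).edist none (some ⟨i, ⟨0, hpos⟩⟩)
        + (spider l).edist (some ⟨i, ⟨0, hpos⟩⟩) (some ⟨i, a⟩) := SimpleGraph.edist_triangle
    _ ≤ 1 + (Nat.dist 0 a.val : ℕ∞) :=
        add_le_add (edist_eq_one_iff_adj.mpr hadj).le (edist_arm_le l i _ a)
    _ = ((a.val + 1 : ℕ) : ℕ∞) := by rw [Nat.dist_zero_left]; push_cast; ring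

lemma edist_hom_le {V W : Type*} {G : SimpleGraph V} {H : SimpleGraph W} (φ : V → W)
    (hφ : ∀ u v, G.Adj u v → H.Adj (φ u) (φ v)) (u v : V) :
    H.edist (φ u) (φ v) ≤ G.edist u v := by
  refine le_iInf fun w => ?_
  calc H.edist (φ u) (φ v) ≤ ((w.map ⟨φ, fun h => hφ _ _ h⟩).length : ℕ∞) :=
        SimpleGraph.edist_le _
    _ = (w.length : ℕ∞) := by rw [SimpleGraph.Walk.length_map]

lemma le_edist_of_lip {V : Type*} {G : SimpleGraph V} {χ : V → ℤ}
    (h : ∀ u v, G.Adj u v → (χ u - χ v).natAbs ≤ 1) (u v : V) :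
    ((χ u - χ v).natAbs : ℕ∞) ≤ G.edist u v := by
  refine le_iInf fun w => ?_
  have : ∀ {x y : V} (w : G.Walk x y), (χ x - χ y).natAbs ≤ w.length := by
    intro x y w
    induction w with
    | nil => simp
    | @cons a b c hadj p ih =>
      have h1 := h a b hadj
      have := Int.natAbs_add_le (χ a - χ b) (χ b - χ c)
      simp only [SimpleGraph.Walk.length_cons]
      omega
  exact_mod_cast Nat.cast_le.mpr (this w)

/-- The arm-potential: positive depth on arm `i₀`, negative depth elsewhere. -/
def armChi {n : ℕ} (l : Fin n → ℕ) (i₀ : Fin n) : Option (Σ i : Fin n, Fin (l i)) → ℤ :=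
  fun v => match v with
  | none => 0
  | some p => if p.1 = i₀ then (p.2.val : ℤ) + 1 else -((p.2.val : ℤ) + 1)

lemma armChi_some {n : ℕ} (l : Fin n → ℕ) (i₀ j : Fin n) (a : Fin (l j)) :
    armChi l i₀ (some ⟨j, a⟩) = if j = i₀ then (a.val : ℤ) + 1 else -((a.val : ℤ) + 1) := rfl

lemma armChi_none {n : ℕ} (l : Fin n → ℕ) (i₀ : Fin n) : armChi l i₀ none = 0 := rfl

lemma armChi_lip {n : ℕ} (l : Fin n → ℕ) (i₀ : Fin n) (u v : Option (Σ i : Fin n, Fin (l i)))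
    (h : (spider l).Adj u v) : (armChi l i₀ u - armChi l i₀ v).natAbs ≤ 1 := by
  match u, v with
  | none, none => exact absurd h (by exact fun h => h)
  | none, some q =>
    have hq : q.2.val = 0 := h
    simp only [armChi]
    split <;> omega
  | some p, none =>
    have hp : p.2.val = 0 := h
    simp only [armChi]
    split <;> omega
  | some p, some q =>
    obtain ⟨h1, h2⟩ : p.1 = q.1 ∧ Nat.dist p.2.val q.2.val = 1 := h
    have h3 : p.2.val - q.2.val + (q.2.val - p.2.val) = 1 := h2
    simp only [armChi, h1]
    split <;> omega

lemma armChi_le_of_edist {n : ℕ} (l : Fin n → ℕ) (i₀ : Fin n)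
    {u v : Option (Σ i : Fin n, Fin (l i))} {r : ℕ}
    (h : (spider l).edist u v ≤ (r : ℕ∞)) :
    (armChi l i₀ u - armChi l i₀ v).natAbs ≤ r := by
  have := (le_edist_of_lip (armChi_lip l i₀) u v).trans h
  exact_mod_cast this


lemma spider_not_burnable (m n : ℕ) (hm : 2 ≤ m) (hmn : m ≤ n) :
      ¬ IsBurnable (spider (fun i : Fin n => if i.val < m then m else 1)) m := by
  set l : Fin n → ℕ := fun i : Fin n => if i.val < m then m else 1 with hl
  rintro ⟨f, hf⟩
  set arm : Fin m → Fin n := Fin.castLE hmn with harm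
  have hlarm : ∀ i : Fin m, l (arm i) = m := by
    intro i; simp [hl, harm, i.isLt]
  have htip : ∀ i : Fin m, m - 1 < l (arm i) := by intro i; rw [hlarm i]; omega
  set t : (i : Fin m) → Option (Σ i : Fin n, Fin (l i)) :=
    fun i => some ⟨arm i, ⟨m - 1, htip i⟩⟩ with ht
  have hchit : ∀ i : Fin m, armChi l (arm i) (t i) = (m : ℤ) := by
    intro i
    rw [ht]
    rw [armChi_some, if_pos rfl, Fin.val_mk, Nat.cast_sub (by omega : 1 ≤ m)]
    ring
  choose g hg using fun i : Fin m => hf (t i)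
  -- each ball covering tip i is centered on arm i, deep
  have hcenter : ∀ i : Fin m, ∃ a : Fin (l (arm i)),
      f (g i) = some ⟨arm i, a⟩ ∧ m ≤ a.val + 1 + (g i).val := by
    intro i
    have h1 := armChi_le_of_edist l (arm i) (hg i)
    rw [hchit i] at h1
    have hglt : (g i).val < m := (g i).isLt
    match hfv : f (g i) with
    | none =>
      rw [hfv] at h1; simp only [armChi] at h1
      omega
    | some ⟨pj, pa⟩ =>
      rw [hfv] at h1
      simp only [armChi] at h1
      by_cases hp : pj = arm i
      · subst hp
        rw [if_pos rfl] at h1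
        exact ⟨pa, rfl, by omega⟩
      · rw [if_neg hp] at h1
        omega
  have hginj : Function.Injective g := by
    intro i j hij
    obtain ⟨a, ha, -⟩ := hcenter i
    obtain ⟨b, hb, -⟩ := hcenter j
    rw [hij, hb] at ha
    simp only [Option.some.injEq] at ha
    exact Fin.castLE_injective hmn (congrArg Sigma.fst ha).symm
  have hgsurj : Function.Surjective g := Finite.surjective_of_injective hginj
  obtain ⟨i₀, hi₀⟩ := hgsurj ⟨0, by omega⟩
  obtain ⟨a₀, ha₀, ha₀'⟩ := hcenter i₀
  have hg₀ : (g i₀).val = 0 := by rw [hi₀]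
  have ha₀v : a₀.val = m - 1 := by
    have h2 := a₀.isLt
    have h3 := hlarm i₀
    omega
  have hm2 : m - 2 < l (arm i₀) := by rw [hlarm i₀]; omega
  obtain ⟨b, hb⟩ := hf (some ⟨arm i₀, ⟨m - 2, hm2⟩⟩)
  obtain ⟨j, hj⟩ := hgsurj b
  obtain ⟨aj, haj, haj'⟩ := hcenter j
  by_cases hji : j = i₀
  · have hb' : f b = some ⟨arm i₀, a₀⟩ := by rw [← hj, hji, ha₀]
    have hb0 : b.val = 0 := by rw [← hj, hji, hg₀]
    rw [hb', hb0] at hb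
    norm_num at hb
    have hv := congrArg Fin.val hb
    simp only [Fin.val_mk] at hv
    omega
  · have harmne : (arm j : Fin n) ≠ arm i₀ := fun h => hji (Fin.castLE_injective hmn h)
    have hfb : f b = some ⟨arm j, aj⟩ := by rw [← hj, haj]
    rw [hfb] at hb
    have h1 := armChi_le_of_edist l (arm i₀) hb
    have hχc : armChi l (arm i₀) (some ⟨arm j, aj⟩) = -((aj.val : ℤ) + 1) := by
      rw [armChi_some, if_neg harmne]
    have hχv : armChi l (arm i₀) (some ⟨arm i₀, (⟨m - 2, hm2⟩ : Fin (l (arm i₀)))⟩)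
        = (m : ℤ) - 2 + 1 := by
      rw [armChi_some, if_pos rfl, Fin.val_mk, Nat.cast_sub (by omega : 2 ≤ m)]
      ring
    rw [hχc, hχv] at h1
    have hblt : b.val < m := b.isLt
    have hjb : (g j).val = b.val := by rw [hj]
    omega

lemma nat_dist_def (a b : ℕ) : Nat.dist a b = a - b + (b - a) := rfl


lemma burnable_aux (m : ℕ) : ∀ (n : ℕ) (l : Fin n → ℕ),
    1 + ∑ i, l i ≤ m ^ 2 - m + (Finset.univ.filter (fun i => 1 ≤ l i)).card →
    IsBurnable (spider l) m := by
  induction m with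
  | zero =>
    intro n l hyp
    exfalso
    have hcard : (Finset.univ.filter (fun i => 1 ≤ l i)).card ≤ ∑ i, l i := by
      calc (Finset.univ.filter (fun i => 1 ≤ l i)).card
          = ∑ i ∈ Finset.univ.filter (fun i => 1 ≤ l i), 1 := Finset.card_eq_sum_ones _
        _ ≤ ∑ i ∈ Finset.univ.filter (fun i => 1 ≤ l i), l i :=
            Finset.sum_le_sum (fun i hi => (Finset.mem_filter.mp hi).2)
        _ ≤ ∑ i, l i := Finset.sum_le_sum_of_subset (Finset.filter_subset _ _)
    simp at hyp
    omega
  | succ M ih =>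
    intro n l hyp
    have hsq : (M+1)^2 - (M+1) = M*M + M := by
      have : (M+1)^2 = M*M + 2*M + 1 := by ring
      omega
    rw [hsq] at hyp
    by_cases hA : ∃ i, 2*M + 1 ≤ l i
    · -- Case A : chop the long arm
      obtain ⟨i, hi⟩ := hA
      set l' : Fin n → ℕ := fun j => if j = i then l i - (2*M+1) else l j with hl'
      have hle : ∀ j, l' j ≤ l j := by
        intro j
        simp only [hl']
        split
        · next h => subst h; omega
        · exact le_rfl
      have hsum : ∑ j, l j = ∑ j, l' j + (2*M+1) := by
        have h1 : ∀ j : Fin n, l j = l' j + (if j = i then 2*M+1 else 0) := by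
          intro j
          by_cases h : j = i
          · subst h; simp [hl']; omega
          · simp [hl', h]
        rw [Finset.sum_congr rfl (fun j _ => h1 j), Finset.sum_add_distrib,
          Finset.sum_ite_eq' Finset.univ i (fun _ => 2*M+1)]
        simp
      have hcard : (Finset.univ.filter (fun j => 1 ≤ l j)).card ≤
          (Finset.univ.filter (fun j => 1 ≤ l' j)).card + 1 := by
        have hsub : Finset.univ.filter (fun j => 1 ≤ l j) ⊆
            insert i (Finset.univ.filter (fun j => 1 ≤ l' j)) := by
          intro j hj
          by_cases h : j = i
          · subst h; exact Finset.mem_insert_self _ _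
          · refine Finset.mem_insert_of_mem (Finset.mem_filter.mpr ⟨Finset.mem_univ _, ?_⟩)
            have := (Finset.mem_filter.mp hj).2
            simpa [hl', h] using this
        calc _ ≤ (insert i (Finset.univ.filter (fun j => 1 ≤ l' j))).card :=
              Finset.card_le_card hsub
          _ ≤ _ := Finset.card_insert_le _ _
      have hyp' : 1 + ∑ j, l' j ≤ M ^ 2 - M + (Finset.univ.filter (fun j => 1 ≤ l' j)).card := by
        have h2 : M^2 = M*M := sq M
        omega
      obtain ⟨f', hf'⟩ := ih n l' hyp'
      set ι : Option (Σ j : Fin n, Fin (l' j)) → Option (Σ j : Fin n, Fin (l j)) :=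
        fun v => v.map (fun p => ⟨p.1, ⟨p.2.val, lt_of_lt_of_le p.2.isLt (hle p.1)⟩⟩) with hι
      have hhom : ∀ u v, (spider l').Adj u v → (spider l).Adj (ι u) (ι v) := by
        rintro (_ | ⟨j, a⟩) (_ | ⟨k, b⟩) h
        · exact h.elim
        · exact h
        · exact h
        · exact ⟨h.1, h.2⟩
      have hmono := edist_hom_le ι hhom
      have hcMlt : l i - (M+1) < l i := by omega
      set cM : Option (Σ j : Fin n, Fin (l j)) := some ⟨i, ⟨l i - (M+1), hcMlt⟩⟩ with hcM
      refine ⟨fun b => if h : b.val < M then ι (f' ⟨b.val, h⟩) else cM, ?_⟩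
      intro v
      match v with
      | none =>
        obtain ⟨b', hb'⟩ := hf' none
        refine ⟨⟨b'.val, by omega⟩, ?_⟩
        simp only [Fin.val_mk, dif_pos b'.isLt, Fin.eta]
        exact le_trans (hmono (f' b') none) hb'
      | some ⟨j, a⟩ =>
        by_cases haj : a.val < l' j
        · obtain ⟨b', hb'⟩ := hf' (some ⟨j, ⟨a.val, haj⟩⟩)
          refine ⟨⟨b'.val, by omega⟩, ?_⟩
          simp only [Fin.val_mk, dif_pos b'.isLt, Fin.eta]
          have himg : ι (some ⟨j, ⟨a.val, haj⟩⟩) = some ⟨j, a⟩ := by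
            simp [hι]
          calc (spider l).edist (ι (f' b')) (some ⟨j, a⟩)
              = (spider l).edist (ι (f' b')) (ι (some ⟨j, ⟨a.val, haj⟩⟩)) := by rw [himg]
            _ ≤ (spider l').edist (f' b') (some ⟨j, ⟨a.val, haj⟩⟩) := hmono _ _
            _ ≤ _ := hb'
        · have hji : j = i := by
            by_contra h
            have : l' j = l j := by simp [hl', h]
            have := a.isLt
            omega
          subst hji
          have hl'j : l' j = l j - (2*M+1) := by simp [hl']
          refine ⟨⟨M, by omega⟩, ?_⟩
          simp only [Fin.val_mk, dif_neg (lt_irrefl M)]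
          refine le_trans (edist_arm_le l j _ a) ?_
          have hd : Nat.dist (l j - (M+1)) a.val ≤ M := by
            rw [nat_dist_def]
            have := a.isLt
            omega
          exact_mod_cast Nat.cast_le.mpr hd
    · -- Case B : head ball plus one ball per long arm
      push_neg at hA
      set K : Finset (Fin n) := Finset.univ.filter (fun i => M + 1 ≤ l i) with hK
      set g : Fin n → ℕ :=
        fun i => (K.filter (fun i' => l i < l i' ∨ (l i' = l i ∧ i' < i))).card with hg
      set k := K.card with hk
      have hKP : K ⊆ Finset.univ.filter (fun i => 1 ≤ l i) := by
        intro j hj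
        have h := (Finset.mem_filter.mp hj).2
        exact Finset.mem_filter.mpr ⟨Finset.mem_univ _, by omega⟩
      have hKmem : ∀ j ∈ K, M + 1 ≤ l j := by
        intro j hj; exact (Finset.mem_filter.mp hj).2
      have hF1 : ∑ j ∈ K, (l j - M) + 1 + k * M ≤ M*M + M + k := by
        have h1 : ∑ j ∈ K, l j = ∑ j ∈ K, (l j - M) + k * M := by
          calc ∑ j ∈ K, l j = ∑ j ∈ K, ((l j - M) + M) :=
              Finset.sum_congr rfl (fun j hj => by have := hKmem j hj; omega)
            _ = ∑ j ∈ K, (l j - M) + ∑ _j ∈ K, M := Finset.sum_add_distrib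
            _ = ∑ j ∈ K, (l j - M) + k * M := by rw [Finset.sum_const, smul_eq_mul, hk]
        set P := Finset.univ.filter (fun i => 1 ≤ l i) with hP
        have h2 : (P \ K).card ≤ ∑ j ∈ P \ K, l j := by
          calc (P \ K).card = ∑ _j ∈ P \ K, 1 := Finset.card_eq_sum_ones _
            _ ≤ _ := Finset.sum_le_sum (fun j hj => by
                have := Finset.mem_filter.mp (Finset.mem_sdiff.mp hj).1
                exact this.2)
        have h3 : ∑ j ∈ P \ K, l j + ∑ j ∈ K, l j = ∑ j ∈ P, l j := Finset.sum_sdiff hKP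
        have h4 : ∑ j ∈ P, l j ≤ ∑ j, l j :=
          Finset.sum_le_sum_of_subset (Finset.filter_subset _ _)
        have h5 : (P \ K).card + k = P.card := by
          rw [hk]; exact Finset.card_sdiff_add_card_eq_card hKP
        omega
      have hkM : k ≤ M := by
        have hSk : k ≤ ∑ j ∈ K, (l j - M) := by
          calc k = ∑ _j ∈ K, 1 := by rw [hk, Finset.card_eq_sum_ones]
            _ ≤ _ := Finset.sum_le_sum (fun j hj => by have := hKmem j hj; omega)
        by_contra hc
        push_neg at hc
        have h6 : (M+1) * M ≤ k * M := Nat.mul_le_mul_right M hc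
        have h7 : (M+1) * M = M*M + M := by ring
        omega
      have hglt : ∀ j ∈ K, g j < k := by
        intro j hj
        have hsub : K.filter (fun i' => l j < l i' ∨ (l i' = l j ∧ i' < j)) ⊆ K.erase j := by
          intro x hx
          simp only [Finset.mem_filter] at hx
          refine Finset.mem_erase.mpr ⟨?_, hx.1⟩
          rcases hx.2 with h | ⟨h1, h2⟩
          · rintro rfl; omega
          · rintro rfl; exact absurd h2 (lt_irrefl _)
        calc g j ≤ (K.erase j).card := Finset.card_le_card hsub
          _ < k := by rw [hk]; exact Finset.card_erase_lt_of_mem hj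
      have hrel : ∀ j j', j' ∈ K → (l j < l j' ∨ (l j' = l j ∧ j' < j)) → g j' < g j := by
        intro j j' hj'K hbeat
        have hsub : K.filter (fun x => l j' < l x ∨ (l x = l j' ∧ x < j')) ⊆
            (K.filter (fun x => l j < l x ∨ (l x = l j ∧ x < j))).erase j' := by
          intro x hx
          simp only [Finset.mem_filter] at hx
          obtain ⟨hxK, hxc⟩ := hx
          refine Finset.mem_erase.mpr ⟨?_, Finset.mem_filter.mpr ⟨hxK, ?_⟩⟩
          · rcases hxc with h | ⟨h1, h2⟩
            · rintro rfl; omega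
            · rintro rfl; exact absurd h2 (lt_irrefl _)
          · rw [Fin.lt_def] at *
            rcases hbeat with h | ⟨h1, h2⟩ <;> rcases hxc with h' | ⟨h1', h2'⟩
            · left; omega
            · left; omega
            · left; omega
            · right; exact ⟨by omega, by omega⟩
        have hj'mem : j' ∈ K.filter (fun x => l j < l x ∨ (l x = l j ∧ x < j)) :=
          Finset.mem_filter.mpr ⟨hj'K, hbeat⟩
        calc g j' ≤ ((K.filter (fun x => l j < l x ∨ (l x = l j ∧ x < j))).erase j').card :=
            Finset.card_le_card hsub
          _ < g j := Finset.card_erase_lt_of_mem hj'mem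
      have hginj : ∀ j ∈ K, ∀ j' ∈ K, g j = g j' → j = j' := by
        intro j hj j' hj' heq
        by_contra hne
        rcases lt_trichotomy (l j) (l j') with h | h | h
        · exact absurd heq (by have := hrel j j' hj' (Or.inl h); omega)
        · rcases lt_trichotomy j' j with h2 | h2 | h2
          · exact absurd heq (by have := hrel j j' hj' (Or.inr ⟨h.symm, h2⟩); omega)
          · exact hne (h2.symm ▸ rfl)
          · exact absurd heq.symm (by have := hrel j' j hj (Or.inr ⟨h, h2⟩); omega)
        · exact absurd heq.symm (by have := hrel j' j hj (Or.inl h); omega)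
      have hF5 : ∀ j ∈ K, l j + 2 * g j + 1 ≤ 3 * M := by
        intro j hj
        by_contra hc
        push_neg at hc
        set S := K.filter (fun i' => l j < l i' ∨ (l i' = l j ∧ i' < j)) with hS
        have hjS : j ∉ S := by
          simp only [hS, Finset.mem_filter]
          rintro ⟨-, h | ⟨h1, h2⟩⟩
          · omega
          · exact absurd h2 (lt_irrefl _)
        have hgjS : g j = S.card := by rw [hg]
        set T := insert j S with hT
        have hTK : T ⊆ K := by
          intro x hx
          rcases Finset.mem_insert.mp hx with rfl | hx
          · exact hj
          · exact (Finset.mem_filter.mp hx).1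
        have hcardT : T.card = g j + 1 := by
          rw [hT, Finset.card_insert_of_notMem hjS, hgjS]
        have hTle : ∀ x ∈ T, l j - M ≤ l x - M := by
          intro x hx
          rcases Finset.mem_insert.mp hx with rfl | hx
          · exact le_rfl
          · have h1 := (Finset.mem_filter.mp hx).2
            have h2 := hKmem x ((Finset.mem_filter.mp hx).1)
            rcases h1 with h | ⟨h, -⟩ <;> omega
        have h7 : (g j + 1) * (l j - M) ≤ ∑ x ∈ T, (l x - M) := by
          have := Finset.card_nsmul_le_sum T (fun x => l x - M) (l j - M) hTle
          rwa [hcardT, smul_eq_mul] at this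
        have h8 : k - T.card ≤ ∑ x ∈ K \ T, (l x - M) := by
          calc k - T.card = (K \ T).card := by rw [hk, Finset.card_sdiff_of_subset hTK]
            _ = ∑ _x ∈ K \ T, 1 := Finset.card_eq_sum_ones _
            _ ≤ _ := Finset.sum_le_sum (fun x hx => by
                have := hKmem x (Finset.mem_sdiff.mp hx).1
                omega)
        have h9 : ∑ x ∈ K \ T, (l x - M) + ∑ x ∈ T, (l x - M) = ∑ x ∈ K, (l x - M) :=
          Finset.sum_sdiff hTK
        have htk : g j + 1 ≤ k := by
          have := Finset.card_le_card hTK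
          omega
        set t := g j + 1 with htdef
        obtain ⟨e, he⟩ : ∃ e, l j = e + M := ⟨l j - M, by have := hKmem j hj; omega⟩
        obtain ⟨d, hd⟩ : ∃ d, k = t + d := ⟨k - t, by omega⟩
        have hsubTe : l j - M = e := by omega
        have hnat : t * e + d + 1 + k * M ≤ M*M + M + k := by
          rw [hsubTe] at h7
          have h7' : t * e ≤ ∑ x ∈ T, (l x - M) := by rw [htdef]; exact h7
          omega
        have heM : e ≤ M := by have := hA j; omega
        have hc2 : 2*M + 2 ≤ e + 2*t := by omega
        have z1 : (t:ℤ) * e + d + 1 + k * M ≤ M*M + M + k := by exact_mod_cast hnat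
        have z2 : (2*(M:ℤ) + 2) ≤ e + 2*t := by exact_mod_cast hc2
        have z3 : (k:ℤ) = t + d := by exact_mod_cast hd
        have z4 : (k:ℤ) ≤ M := by exact_mod_cast hkM
        have z5 : (1:ℤ) ≤ t := by rw [htdef]; push_cast; omega
        have z6 : (0:ℤ) ≤ d := Int.natCast_nonneg d
        have z7 : (e:ℤ) ≤ M := by exact_mod_cast heM
        have z9 : (0:ℤ) ≤ M := Int.natCast_nonneg M
        have zq : (0:ℤ) ≤ ((M:ℤ) - t) * (2*t - M - 2) :=
          mul_nonneg (by linarith) (by linarith)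
        have zp : (t:ℤ) * (2*M + 2) ≤ t * (e + 2*t) :=
          mul_le_mul_of_nonneg_left z2 (by linarith)
        nlinarith [z1, z3, z4, z5, z6, zq, zp, z9]
      -- construction of the burning centers
      have hcen : ∀ j, j ∈ K → l j - 1 - (M - 1 - g j) < l j := by
        intro j hj
        have := hKmem j hj
        omega
      set F : Fin (M+1) → Option (Σ j : Fin n, Fin (l j)) := fun b =>
        if h : ∃ j, j ∈ K ∧ M - 1 - g j = b.val ∧ b.val < M then
          some ⟨h.choose, ⟨l h.choose - 1 - (M - 1 - g h.choose), hcen h.choose h.choose_spec.1⟩⟩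
        else none with hF
      refine ⟨F, ?_⟩
      intro v
      match v with
      | none =>
        refine ⟨⟨M, by omega⟩, ?_⟩
        simp only [hF, Fin.val_mk]
        rw [dif_neg (by rintro ⟨j, -, -, h⟩; omega)]
        simp
      | some ⟨j, a⟩ =>
        by_cases hdeep : a.val ≤ M - 1
        · refine ⟨⟨M, by omega⟩, ?_⟩
          simp only [hF, Fin.val_mk]
          rw [dif_neg (by rintro ⟨j', -, -, h⟩; omega)]
          refine le_trans (edist_head_le l j a) ?_
          have h1 : a.val < l j := a.isLt
          have h2 := hA j
          exact_mod_cast Nat.cast_le.mpr (by omega : a.val + 1 ≤ M)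
        · have hjK : j ∈ K := Finset.mem_filter.mpr ⟨Finset.mem_univ _, by
            have := a.isLt; omega⟩
          have hgj := hglt j hjK
          have hMpos : 1 ≤ M := by
            have := hKmem j hjK
            have := hA j
            omega
          have hbval : M - 1 - g j < M + 1 := by omega
          refine ⟨⟨M - 1 - g j, hbval⟩, ?_⟩
          simp only [hF, Fin.val_mk]
          have hex : ∃ j', j' ∈ K ∧ M - 1 - g j' = M - 1 - g j ∧ M - 1 - g j < M :=
            ⟨j, hjK, rfl, by omega⟩
          rw [dif_pos hex]
          have hj' : hex.choose = j := by
            apply hginj _ hex.choose_spec.1 _ hjK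
            have h1 := hglt _ hex.choose_spec.1
            have hval := hex.choose_spec.2.1
            omega
          have hbound : ∀ (x : Fin n) (hx : x ∈ K), x = j →
              (spider l).edist (some ⟨x, ⟨l x - 1 - (M - 1 - g x), hcen x hx⟩⟩)
                (some ⟨j, a⟩) ≤ ((M - 1 - g j : ℕ) : ℕ∞) := by
            rintro x hx rfl
            refine le_trans (edist_arm_le l x _ a) ?_
            have hF5j := hF5 x hx
            have h1 : a.val < l x := a.isLt
            have h2 := hKmem x hx
            have hd : Nat.dist (l x - 1 - (M - 1 - g x)) a.val ≤ M - 1 - g x := by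
              rw [nat_dist_def]
              omega
            exact_mod_cast Nat.cast_le.mpr hd
          exact hbound hex.choose hex.choose_spec.1 hj'

/-- For `2 ≤ m ≤ n`, every `n`-spider of order at most `m² + n - m` is `m`-burnable,
and the `n`-spider with `m` arms of length `m` and `n - m` arms of length `1`,
which has order `m² + n - m + 1`, is not `m`-burnable. -/
theorem stmt15 (m n : ℕ) (hm : 2 ≤ m) (hmn : m ≤ n) :
    (∀ l : Fin n → ℕ, (∀ i, 1 ≤ l i) → 1 + ∑ i, l i ≤ m ^ 2 + n - m →
      IsBurnable (spider l) m) ∧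
    (1 + ∑ i, (fun i : Fin n => if i.val < m then m else 1) i = m ^ 2 + n - m + 1 ∧
      ¬ IsBurnable (spider (fun i : Fin n => if i.val < m then m else 1)) m) := by
  constructor
  · intro l hpos hord
    apply burnable_aux m n l
    have hcard : (Finset.univ.filter (fun i => 1 ≤ l i)) = Finset.univ :=
      Finset.filter_true_of_mem (fun i _ => hpos i)
    rw [hcard, Finset.card_univ, Fintype.card_fin]
    have hmm : m ≤ m ^ 2 := Nat.le_self_pow (by norm_num) m
    omega
  · constructor
    · have h1 : ∑ i : Fin n, (if i.val < m then m else 1) =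
          ∑ j ∈ Finset.range n, (if j < m then m else 1) :=
        Fin.sum_univ_eq_sum_range (fun j => if j < m then m else 1) n
      show 1 + ∑ i : Fin n, (if i.val < m then m else 1) = m ^ 2 + n - m + 1
      rw [h1, Finset.range_eq_Ico, ← Finset.sum_Ico_consecutive _ (Nat.zero_le m) hmn]
      rw [Finset.sum_congr rfl (fun j hj => if_pos (Finset.mem_Ico.mp hj).2),
        Finset.sum_congr rfl (fun j hj => if_neg (by have := (Finset.mem_Ico.mp hj).1; omega))]
      simp only [Finset.sum_const, Nat.Ico_zero_eq_range, Finset.card_range, smul_eq_mul,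
        mul_one, Nat.card_Ico]
      have : m ^ 2 = m * m := sq m
      omega
    · exact spider_not_burnable m n hm hmn
end

section
/- Let m > n ≥ 2 and let T be an n-spider of order at most m², whose arm lengths are l_1 ≥ l_2 ≥ ... ≥ l_n. If l_i ≤ 3m - 2 - 2i for all 1 ≤ i ≤ n, then T is m-burnable. -/

private lemma spider_head_edist {n : ℕ} (l : Fin n → ℕ) (i : Fin n) :
    ∀ (j : ℕ) (h : j < l i),
      (spider l).edist none (some ⟨i, ⟨j, h⟩⟩) ≤ ((j + 1 : ℕ) : ℕ∞) := by
  intro j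
  induction j with
  | zero =>
    intro h
    have hadj : (spider l).Adj none (some ⟨i, ⟨0, h⟩⟩) := rfl
    have := SimpleGraph.edist_le hadj.toWalk
    simpa using this
  | succ j ih =>
    intro h
    have hj : j < l i := Nat.lt_of_succ_lt h
    have hadj : (spider l).Adj (some ⟨i, ⟨j, hj⟩⟩) (some ⟨i, ⟨j + 1, h⟩⟩) := by
      refine ⟨rfl, ?_⟩
      simp [Nat.dist]
    have h1 := SimpleGraph.edist_le hadj.toWalk
    calc (spider l).edist none (some ⟨i, ⟨j + 1, h⟩⟩)
        ≤ (spider l).edist none (some ⟨i, ⟨j, hj⟩⟩)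
          + (spider l).edist (some ⟨i, ⟨j, hj⟩⟩) (some ⟨i, ⟨j + 1, h⟩⟩) :=
          SimpleGraph.edist_triangle
      _ ≤ ((j + 1 : ℕ) : ℕ∞) + 1 := add_le_add (ih hj) (by simpa using h1)
      _ = ((j + 1 + 1 : ℕ) : ℕ∞) := by push_cast; ring

private lemma spider_arm_edist {n : ℕ} (l : Fin n → ℕ) (i : Fin n) (a : ℕ) :
    ∀ b, a ≤ b → ∀ (ha : a < l i) (hb : b < l i),
      (spider l).edist (some ⟨i, ⟨a, ha⟩⟩) (some ⟨i, ⟨b, hb⟩⟩) ≤ ((b - a : ℕ) : ℕ∞) := by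
  refine Nat.le_induction ?_ ?_
  · intro ha hb
    simp
  · intro b hab ih ha hb
    have hb' : b < l i := Nat.lt_of_succ_lt hb
    have hadj : (spider l).Adj (some ⟨i, ⟨b, hb'⟩⟩) (some ⟨i, ⟨b + 1, hb⟩⟩) := by
      refine ⟨rfl, ?_⟩
      simp [Nat.dist]
    have h1 := SimpleGraph.edist_le hadj.toWalk
    calc (spider l).edist (some ⟨i, ⟨a, ha⟩⟩) (some ⟨i, ⟨b + 1, hb⟩⟩)
        ≤ (spider l).edist (some ⟨i, ⟨a, ha⟩⟩) (some ⟨i, ⟨b, hb'⟩⟩)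
          + (spider l).edist (some ⟨i, ⟨b, hb'⟩⟩) (some ⟨i, ⟨b + 1, hb⟩⟩) :=
          SimpleGraph.edist_triangle
      _ ≤ ((b - a : ℕ) : ℕ∞) + 1 := add_le_add (ih ha hb') (by simpa using h1)
      _ = ((b + 1 - a : ℕ) : ℕ∞) := by
          rw [Nat.succ_sub hab]; push_cast; ring

private lemma spider_dist_edist {n : ℕ} (l : Fin n → ℕ) (i : Fin n) (a b : ℕ)
    (ha : a < l i) (hb : b < l i) :
    (spider l).edist (some ⟨i, ⟨a, ha⟩⟩) (some ⟨i, ⟨b, hb⟩⟩) ≤ ((Nat.dist a b : ℕ) : ℕ∞) := by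
  rcases le_total a b with h | h
  · have := spider_arm_edist l i a b h ha hb
    rwa [Nat.dist_eq_sub_of_le h]
  · have := spider_arm_edist l i b a h hb ha
    rw [Nat.dist_eq_sub_of_le_right h]
    rwa [SimpleGraph.edist_comm]

private lemma spider_dist_edist' {n : ℕ} (l : Fin n → ℕ) (i i' : Fin n) (h : i = i')
    (a b : ℕ) (ha : a < l i) (hb : b < l i') :
    (spider l).edist (some ⟨i, ⟨a, ha⟩⟩) (some ⟨i', ⟨b, hb⟩⟩) ≤ ((Nat.dist a b : ℕ) : ℕ∞) := by
  subst h
  exact spider_dist_edist l i a b ha hb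

/-- An `n`-spider of order at most `m²` (with `m > n ≥ 2`) with arm lengths
`l₁ ≥ l₂ ≥ ⋯ ≥ lₙ` satisfying `lᵢ ≤ 3m - 2 - 2i` for all `1 ≤ i ≤ n`
(here `i` is the one-based index) is `m`-burnable. -/
theorem stmt17 (m n : ℕ) (hn : 2 ≤ n) (hm : n < m) (l : Fin n → ℕ)
    (hl : ∀ i, 1 ≤ l i)
    (hsorted : ∀ i j : Fin n, i ≤ j → l j ≤ l i)
    (horder : 1 + ∑ i, l i ≤ m ^ 2)
    (hbound : ∀ i : Fin n, l i ≤ 3 * m - 2 - 2 * (i.val + 1)) :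
    IsBurnable (spider l) m := by
  classical
  refine ⟨fun k => if h : m - 2 - k.val < n ∧ k.val ≤ m - 2 then
      some ⟨⟨m - 2 - k.val, h.1⟩,
        ⟨min (m - 1 + k.val) (l ⟨m - 2 - k.val, h.1⟩ - 1), by
          have := hl ⟨m - 2 - k.val, h.1⟩; omega⟩⟩
    else none, ?_⟩
  intro v
  have hm3 : 3 ≤ m := by omega
  rcases v with _ | ⟨i, j⟩
  · refine ⟨⟨m - 1, by omega⟩, ?_⟩
    simp only [Fin.val_mk]
    rw [dif_neg (by omega)]
    simp
  · by_cases hj : j.val ≤ m - 2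
    · refine ⟨⟨m - 1, by omega⟩, ?_⟩
      simp only [Fin.val_mk]
      rw [dif_neg (by omega)]
      have h1 : (spider l).edist none (some ⟨i, ⟨j.val, j.isLt⟩⟩) ≤ ((j.val + 1 : ℕ) : ℕ∞) :=
        spider_head_edist l i j.val j.isLt
      calc (spider l).edist none (some ⟨i, j⟩)
          ≤ ((j.val + 1 : ℕ) : ℕ∞) := by convert h1
        _ ≤ ((m - 1 : ℕ) : ℕ∞) := Nat.cast_le.mpr (by omega)
    · have hin : i.val < n := i.isLt
      have hcond : m - 2 - (m - 2 - i.val) < n ∧ m - 2 - i.val ≤ m - 2 := by omega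
      refine ⟨⟨m - 2 - i.val, by omega⟩, ?_⟩
      simp only [Fin.val_mk]
      rw [dif_pos hcond]
      have hieq : (⟨m - 2 - (m - 2 - i.val), hcond.1⟩ : Fin n) = i :=
        Fin.ext (by simp only [Fin.val_mk]; omega)
      refine le_trans (spider_dist_edist' l _ i hieq _ j.val _ j.isLt) ?_
      refine Nat.cast_le.mpr ?_
      have hL : l (⟨m - 2 - (m - 2 - i.val), hcond.1⟩ : Fin n) = l i := by rw [hieq]
      have hb := hbound i
      have hjl : j.val < l i := j.isLt
      have h1 := hl i
      simp only [Nat.dist, hL]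
      omega
end
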